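/- arXiv:2406.02901 — 8 statements merged into one kernel-verified Lean document; each statement's English description precedes it below -/
import Mathlib

section
/- Let F be a function from the open unit disc D in ℂ to ℂ such that 0 ≤ Re F(z) ≤ 1 for all z ∈ D, and such that the function z ↦ F(z) + z·conj(F(z)) is holomorphic on D. Then F is constant on D. -/
open Complex Metric Set Filter MeasureTheory
open scoped Real Topology

private lemma conj_intervalIntegral (f : ℝ → ℂ) (a b : ℝ) :
    (starRingEnd ℂ) (∫ x in a..b, f x) = ∫ x in a..b, (starRingEnd ℂ) (f x) := by
  rw [intervalIntegral, intervalIntegral, map_sub, integral_conj, integral_conj]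

private lemma sphere_sub_ball {r : ℝ} (hr1 : r < 1) : sphere (0:ℂ) r ⊆ ball (0:ℂ) 1 :=
  sphere_subset_closedBall.trans (closedBall_subset_ball hr1)

private lemma cauchyD {K : ℂ → ℂ} (hK : DifferentiableOn ℂ K (ball (0:ℂ) 1))
    {r : ℝ} (hr0 : 0 < r) (hr1 : r < 1) {v : ℂ} (hv : v ∈ ball (0:ℂ) r) :
    (∮ z in C(0, r), (z - v)⁻¹ • K z) = (2 * ↑Real.pi * I) • K v := by
  have h1 : DifferentiableOn ℂ K (closure (ball (0:ℂ) r)) := by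
    rw [closure_ball (0:ℂ) hr0.ne']
    exact hK.mono (closedBall_subset_ball hr1)
  exact h1.diffContOnCl.circleIntegral_sub_inv_smul hv

private lemma circleIntegral_add {f g : ℂ → ℂ} {c : ℂ} {R : ℝ} (hf : CircleIntegrable f c R)
    (hg : CircleIntegrable g c R) :
    (∮ z in C(c, R), (f z + g z)) = (∮ z in C(c, R), f z) + ∮ z in C(c, R), g z := by
  simp only [circleIntegral, smul_add, intervalIntegral.integral_add hf.out hg.out]

private lemma hIa {K : ℂ → ℂ} (hK : DifferentiableOn ℂ K (ball (0:ℂ) 1))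
    {w : ℂ} {r : ℝ} (hw0 : w ≠ 0) (hwr : ‖w‖ < r) (hr1 : r < 1) :
    (∮ z in C(0, r), (z - w)⁻¹ * ((1 - (r:ℂ)^2 * z⁻¹) * K z))
      = (2 * ↑Real.pi * I) * ((1 - (r:ℂ)^2/w) * K w + ((r:ℂ)^2/w) * K 0) := by
  have hr0 : 0 < r := lt_of_le_of_lt (norm_nonneg w) hwr
  have hw : w ∈ ball (0:ℂ) r := mem_ball_zero_iff.2 hwr
  have h0 : (0:ℂ) ∈ ball (0:ℂ) r := mem_ball_self hr0
  have hKc : ContinuousOn K (sphere (0:ℂ) r) :=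
    hK.continuousOn.mono (sphere_sub_ball hr1)
  have hzs : ∀ z ∈ sphere (0:ℂ) r, z ≠ 0 ∧ z ≠ w := by
    intro z hz
    have hn : ‖z‖ = r := by simpa using hz
    constructor
    · intro h; rw [h, norm_zero] at hn; linarith
    · intro h; rw [h] at hn; linarith
  have hcong : EqOn (fun z => (z - w)⁻¹ * ((1 - (r:ℂ)^2 * z⁻¹) * K z))
      (fun z => (1 - (r:ℂ)^2/w) • ((z - w)⁻¹ • K z) + ((r:ℂ)^2/w) • ((z - 0)⁻¹ • K z))
      (sphere (0:ℂ) r) := by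
    intro z hz
    obtain ⟨hz0, hzw⟩ := hzs z hz
    have hzw' : z - w ≠ 0 := sub_ne_zero.2 hzw
    simp only [smul_eq_mul, sub_zero]
    field_simp
    ring
  have hi1 : CircleIntegrable (fun z => (1 - (r:ℂ)^2/w) • ((z - w)⁻¹ • K z)) 0 r := by
    apply ContinuousOn.circleIntegrable hr0.le
    apply ContinuousOn.fun_smul continuousOn_const
    apply ContinuousOn.fun_smul _ hKc
    exact ((continuousOn_id.sub continuousOn_const).inv₀
      fun z hz => sub_ne_zero.2 (hzs z hz).2)
  have hi2 : CircleIntegrable (fun z => ((r:ℂ)^2/w) • ((z - 0)⁻¹ • K z)) 0 r := by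
    apply ContinuousOn.circleIntegrable hr0.le
    apply ContinuousOn.fun_smul continuousOn_const
    apply ContinuousOn.fun_smul _ hKc
    exact ((continuousOn_id.sub continuousOn_const).inv₀
      fun z hz => sub_ne_zero.2 (by simpa using (hzs z hz).1))
  rw [circleIntegral.integral_congr hr0.le hcong, circleIntegral_add hi1 hi2,
    circleIntegral.integral_smul, circleIntegral.integral_smul,
    cauchyD hK hr0 hr1 hw, cauchyD hK hr0 hr1 h0]
  simp only [smul_eq_mul]
  ring

private lemma hIb {K : ℂ → ℂ} (hK : DifferentiableOn ℂ K (ball (0:ℂ) 1))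
    {w : ℂ} {r : ℝ} (hw0 : w ≠ 0) (hwr : ‖w‖ < r) (hr1 : r < 1) :
    (∮ z in C(0, r), (z - w)⁻¹ * ((1 - z) * (starRingEnd ℂ) (K z)))
      = (starRingEnd ℂ) ((2 * ↑Real.pi * I) *
          (((starRingEnd ℂ) w - 1) * K 0 + (r:ℂ)^2 * deriv K 0)) := by
  have hr0 : 0 < r := lt_of_le_of_lt (norm_nonneg w) hwr
  have h0 : (0:ℂ) ∈ ball (0:ℂ) r := mem_ball_self hr0
  have hKc : ContinuousOn K (sphere (0:ℂ) r) := hK.continuousOn.mono (sphere_sub_ball hr1)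
  have hzsph : ∀ z ∈ sphere (0:ℂ) r, z ≠ 0 ∧ ((r:ℂ)^2 - (starRingEnd ℂ) w * z ≠ 0) := by
    intro z hz
    have hn : ‖z‖ = r := by simpa using hz
    have hz0 : z ≠ 0 := by intro h; rw [h, norm_zero] at hn; linarith
    refine ⟨hz0, fun h => ?_⟩
    have h2 : (r:ℂ)^2 = (starRingEnd ℂ) w * z := by linear_combination h
    have h3 : r^2 = ‖w‖ * r := by
      have := congrArg norm h2
      simpa [norm_mul, hn, abs_of_pos hr0] using this
    nlinarith
  set g : ℂ → ℂ := fun z => ((starRingEnd ℂ) w - 1) • ((z - 0)⁻¹ • K z) +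
      ((r:ℂ)^2 • (z⁻¹ * z⁻¹ * K z) +
        ((starRingEnd ℂ) w * ((starRingEnd ℂ) w - 1)) • (((r:ℂ)^2 - (starRingEnd ℂ) w * z)⁻¹ * K z))
    with hg
  have h1 : (starRingEnd ℂ) (∮ z in C(0, r), (z - w)⁻¹ * ((1 - z) * (starRingEnd ℂ) (K z)))
      = ∮ z in C(0, r), g z := by
    simp only [circleIntegral, deriv_circleMap]
    rw [conj_intervalIntegral]
    apply intervalIntegral.integral_congr
    intro θ _
    set z := circleMap 0 r θ with hzdef
    have hz0 : z ≠ 0 := circleMap_ne_center hr0.ne'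
    have hzs : z ∈ sphere (0:ℂ) r := circleMap_mem_sphere 0 hr0.le θ
    have hden : (r:ℂ)^2 - (starRingEnd ℂ) w * z ≠ 0 := (hzsph z hzs).2
    have hzz : z * (starRingEnd ℂ) z = (r:ℂ)^2 := by
      rw [Complex.mul_conj]
      norm_cast
      rw [← Complex.sq_norm]
      simp [hzdef, norm_circleMap_zero, abs_of_pos hr0]
    have hc : (starRingEnd ℂ) z = (r:ℂ)^2 / z := by
      rw [eq_div_iff hz0, mul_comm]; exact hzz
    simp only [smul_eq_mul, hg]
    rw [map_mul, map_mul, map_mul, map_mul, map_inv₀, map_sub, map_sub, map_one, conj_conj,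
      conj_I, hc]
    have h2 : (r:ℂ)^2/z - (starRingEnd ℂ) w ≠ 0 := by
      rw [div_sub' hz0]
      exact div_ne_zero (by rw [mul_comm] at hden; exact hden) hz0
    have hden' : ((r:ℂ)^2 - z * (starRingEnd ℂ) w) ≠ 0 := by rwa [mul_comm] at hden
    rw [← hzdef]
    field_simp
    ring
  have hcont1 : ContinuousOn (fun z => (z - 0)⁻¹ • K z) (sphere (0:ℂ) r) := by
    apply ContinuousOn.fun_smul _ hKc
    exact ((continuousOn_id.sub continuousOn_const).inv₀
      fun z hz => sub_ne_zero.2 (by simpa using (hzsph z hz).1))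
  have hcont2 : ContinuousOn (fun z => z⁻¹ * z⁻¹ * K z) (sphere (0:ℂ) r) := by
    have hi : ContinuousOn (fun z : ℂ => z⁻¹) (sphere (0:ℂ) r) :=
      continuousOn_id.inv₀ fun z hz => (hzsph z hz).1
    exact (hi.mul hi).mul hKc
  have hcont3 : ContinuousOn (fun z => (((r:ℂ)^2 - (starRingEnd ℂ) w * z)⁻¹ * K z))
      (sphere (0:ℂ) r) := by
    apply ContinuousOn.mul _ hKc
    exact ((continuousOn_const.sub (continuousOn_const.mul continuousOn_id)).inv₀
      fun z hz => (hzsph z hz).2)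
  have hI2 : (∮ z in C(0, r), z⁻¹ * z⁻¹ * K z) = (2 * ↑Real.pi * I) • deriv K 0 := by
    have hds : DifferentiableOn ℂ (dslope K 0) (ball (0:ℂ) 1) :=
      (Complex.differentiableOn_dslope (isOpen_ball.mem_nhds (mem_ball_self one_pos))).2 hK
    have hcong : EqOn (fun z => z⁻¹ * z⁻¹ * K z)
        (fun z => K 0 • (z - 0) ^ (-2 : ℤ) + (z - 0)⁻¹ • dslope K 0 z) (sphere (0:ℂ) r) := by
      intro z hz
      have hz0 : z ≠ 0 := (hzsph z hz).1
      have h2 : dslope K 0 z = (K z - K 0) * z⁻¹ := by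
        rw [dslope_of_ne _ hz0, slope_def_field, sub_zero, div_eq_mul_inv]
      simp only [smul_eq_mul, sub_zero, h2, zpow_neg]
      rw [zpow_two, mul_inv]
      ring
    rw [circleIntegral.integral_congr hr0.le hcong, circleIntegral_add, circleIntegral.integral_smul,
      circleIntegral.integral_sub_zpow_of_ne (by decide) 0 0 r, cauchyD hds hr0 hr1 h0, dslope_same]
    · simp
    · apply ContinuousOn.circleIntegrable hr0.le
      apply ContinuousOn.fun_smul continuousOn_const
      apply ContinuousOn.zpow₀ (continuousOn_id.sub continuousOn_const)
      exact fun z hz => Or.inl (sub_ne_zero.2 (by simpa using (hzsph z hz).1))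
    · apply ContinuousOn.circleIntegrable hr0.le
      apply ContinuousOn.fun_smul _ (((continuousOn_dslope
          (isOpen_ball.mem_nhds (mem_ball_self one_pos))).2 ⟨hK.continuousOn,
            hK.differentiableAt (isOpen_ball.mem_nhds (mem_ball_self one_pos))⟩).mono
            (sphere_sub_ball hr1))
      exact ((continuousOn_id.sub continuousOn_const).inv₀
        fun z hz => sub_ne_zero.2 (by simpa using (hzsph z hz).1))
  have hI3 : (∮ z in C(0, r), (((r:ℂ)^2 - (starRingEnd ℂ) w * z)⁻¹ * K z)) = 0 := by
    set M : ℂ → ℂ := fun z => z * (((r:ℂ)^2 - (starRingEnd ℂ) w * z)⁻¹ * K z) with hM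
    have hMd : DifferentiableOn ℂ M (closure (ball (0:ℂ) r)) := by
      rw [closure_ball (0:ℂ) hr0.ne']
      apply DifferentiableOn.mul differentiableOn_id
      apply DifferentiableOn.mul _ (hK.mono (closedBall_subset_ball hr1))
      apply DifferentiableOn.inv
      · exact (differentiableOn_const _).sub ((differentiableOn_const _).mul differentiableOn_id)
      · intro z hz
        intro h
        have h2 : (r:ℂ)^2 = (starRingEnd ℂ) w * z := by linear_combination h
        have h3 : r^2 = ‖w‖ * ‖z‖ := by
          have := congrArg norm h2
          simpa [norm_mul, abs_of_pos hr0] using this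
        have hzr : ‖z‖ ≤ r := by simpa using hz
        nlinarith [norm_nonneg z, norm_nonneg w]
    have hcau := hMd.diffContOnCl.circleIntegral_sub_inv_smul h0
    have hM0 : M 0 = 0 := by simp [hM]
    have hcong : EqOn (fun z => (((r:ℂ)^2 - (starRingEnd ℂ) w * z)⁻¹ * K z))
        (fun z => (z - 0)⁻¹ • M z) (sphere (0:ℂ) r) := by
      intro z hz
      have hz0 : z ≠ 0 := (hzsph z hz).1
      simp only [smul_eq_mul, sub_zero, hM]
      rw [inv_mul_cancel_left₀ hz0]
    rw [circleIntegral.integral_congr hr0.le hcong, hcau, hM0, smul_zero]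
  have h2 : (∮ z in C(0, r), g z)
      = (2 * ↑Real.pi * I) * (((starRingEnd ℂ) w - 1) * K 0 + (r:ℂ)^2 * deriv K 0) := by
    rw [hg, circleIntegral_add, circleIntegral_add, circleIntegral.integral_smul,
      circleIntegral.integral_smul, circleIntegral.integral_smul,
      cauchyD hK hr0 hr1 h0, hI2, hI3]
    · simp only [smul_eq_mul]; ring
    · exact ContinuousOn.circleIntegrable hr0.le (continuousOn_const.fun_smul hcont2)
    · exact ContinuousOn.circleIntegrable hr0.le (continuousOn_const.fun_smul hcont3)
    · exact ContinuousOn.circleIntegrable hr0.le (continuousOn_const.fun_smul hcont1)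
    · apply ContinuousOn.circleIntegrable hr0.le
      exact (continuousOn_const.fun_smul hcont2).add (continuousOn_const.fun_smul hcont3)
  calc (∮ z in C(0, r), (z - w)⁻¹ * ((1 - z) * (starRingEnd ℂ) (K z)))
      = (starRingEnd ℂ) ((starRingEnd ℂ)
          (∮ z in C(0, r), (z - w)⁻¹ * ((1 - z) * (starRingEnd ℂ) (K z)))) := (Complex.conj_conj _).symm
    _ = (starRingEnd ℂ) ((2 * ↑Real.pi * I) *
          (((starRingEnd ℂ) w - 1) * K 0 + (r:ℂ)^2 * deriv K 0)) := by rw [h1, h2]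

private lemma keyBound {K : ℂ → ℂ} (hK : DifferentiableOn ℂ K (ball (0:ℂ) 1))
    (hb : ∀ z ∈ ball (0:ℂ) 1, |(K z - z * (starRingEnd ℂ) (K z)).re| ≤ 1 - Complex.normSq z)
    {w : ℂ} (hw0 : w ≠ 0) {r : ℝ} (hwr : ‖w‖ < r) (hr1 : r < 1) :
    ‖(1 - (r:ℂ)^2/w) * K w + ((r:ℂ)^2/w) * K 0 + (1-w) * (starRingEnd ℂ) (K 0)
      - (r:ℂ)^2 * (starRingEnd ℂ) (deriv K 0)‖ ≤ 2*r*(1-r^2)/(r-‖w‖) := by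
  have hr0 : 0 < r := lt_of_le_of_lt (norm_nonneg w) hwr
  have hKc : ContinuousOn K (sphere (0:ℂ) r) := hK.continuousOn.mono (sphere_sub_ball hr1)
  have hzs : ∀ z ∈ sphere (0:ℂ) r, z ≠ 0 ∧ z ≠ w ∧ z * (starRingEnd ℂ) z = (r:ℂ)^2 := by
    intro z hz
    have hn : ‖z‖ = r := by simpa using hz
    refine ⟨?_, ?_, ?_⟩
    · intro h; rw [h, norm_zero] at hn; linarith
    · intro h; rw [h] at hn; linarith
    · rw [Complex.mul_conj]
      norm_cast
      rw [← Complex.sq_norm, hn]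
  have hcong : EqOn (fun z => (z - w)⁻¹ * (((K z - z * (starRingEnd ℂ) (K z)).re : ℝ) : ℂ))
      (fun z => (2:ℂ)⁻¹ • ((z - w)⁻¹ * ((1 - (r:ℂ)^2 * z⁻¹) * K z))
        + (2:ℂ)⁻¹ • ((z - w)⁻¹ * ((1 - z) * (starRingEnd ℂ) (K z)))) (sphere (0:ℂ) r) := by
    intro z hz
    obtain ⟨hz0, hzw, hzz⟩ := hzs z hz
    have hzw' : z - w ≠ 0 := sub_ne_zero.2 hzw
    have hre : ((((K z - z * (starRingEnd ℂ) (K z)).re : ℝ)) : ℂ)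
        = ((K z - z * (starRingEnd ℂ) (K z)) + (starRingEnd ℂ) (K z - z * (starRingEnd ℂ) (K z)))/2 := by
      rw [eq_div_iff (two_ne_zero), mul_comm]
      exact_mod_cast (Complex.add_conj _).symm
    have hc : (starRingEnd ℂ) z = (r:ℂ)^2 / z := by
      rw [eq_div_iff hz0, mul_comm]; exact hzz
    simp only [smul_eq_mul]
    rw [hre, map_sub, map_mul, conj_conj, hc]
    field_simp
    ring
  have hi1 : CircleIntegrable (fun z => (2:ℂ)⁻¹ • ((z - w)⁻¹ * ((1 - (r:ℂ)^2 * z⁻¹) * K z))) 0 r := by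
    apply ContinuousOn.circleIntegrable hr0.le
    apply ContinuousOn.fun_smul continuousOn_const
    apply ContinuousOn.mul _ (ContinuousOn.mul _ hKc)
    · exact ((continuousOn_id.sub continuousOn_const).inv₀
        fun z hz => sub_ne_zero.2 (hzs z hz).2.1)
    · exact continuousOn_const.sub (continuousOn_const.mul
        (continuousOn_id.inv₀ fun z hz => (hzs z hz).1))
  have hi2 : CircleIntegrable (fun z => (2:ℂ)⁻¹ • ((z - w)⁻¹ * ((1 - z) * (starRingEnd ℂ) (K z)))) 0 r := by
    apply ContinuousOn.circleIntegrable hr0.le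
    apply ContinuousOn.fun_smul continuousOn_const
    apply ContinuousOn.mul _ (ContinuousOn.mul (continuousOn_const.sub continuousOn_id)
      (Complex.continuous_conj.comp_continuousOn hKc))
    exact ((continuousOn_id.sub continuousOn_const).inv₀
      fun z hz => sub_ne_zero.2 (hzs z hz).2.1)
  have hT : (∮ z in C(0,r), (z - w)⁻¹ * (((K z - z * (starRingEnd ℂ) (K z)).re : ℝ) : ℂ))
      = (↑Real.pi * I) * ((1 - (r:ℂ)^2/w) * K w + ((r:ℂ)^2/w) * K 0
          + (1-w) * (starRingEnd ℂ) (K 0) - (r:ℂ)^2 * (starRingEnd ℂ) (deriv K 0)) := by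
    rw [circleIntegral.integral_congr hr0.le hcong, circleIntegral_add hi1 hi2,
      circleIntegral.integral_smul, circleIntegral.integral_smul,
      hIa hK hw0 hwr hr1, hIb hK hw0 hwr hr1]
    simp only [map_mul, map_add, map_sub, map_one, map_pow, conj_conj, conj_I,
      Complex.conj_ofReal, map_ofNat, smul_eq_mul]
    ring
  have hbnd : ‖(∮ z in C(0,r), (z - w)⁻¹ * (((K z - z * (starRingEnd ℂ) (K z)).re : ℝ) : ℂ))‖
      ≤ 2 * Real.pi * r * ((r-‖w‖)⁻¹ * (1-r^2)) := by
    apply circleIntegral.norm_integral_le_of_norm_le_const hr0.le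
    intro z hz
    have hn : ‖z‖ = r := by simpa using hz
    have hz1 : z ∈ ball (0:ℂ) 1 := (sphere_sub_ball hr1) hz
    have h1 : |(K z - z * (starRingEnd ℂ) (K z)).re| ≤ 1 - r^2 := by
      have := hb z hz1
      rwa [show Complex.normSq z = r^2 by
        rw [← Complex.sq_norm, hn]] at this
    have h2 : ‖(z - w)⁻¹‖ ≤ (r - ‖w‖)⁻¹ := by
      rw [norm_inv]
      apply inv_anti₀ (by linarith)
      calc r - ‖w‖ = ‖z‖ - ‖w‖ := by rw [hn]
        _ ≤ ‖z - w‖ := norm_sub_norm_le z w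
    rw [norm_mul]
    have h3 : ‖(((K z - z * (starRingEnd ℂ) (K z)).re : ℝ) : ℂ)‖
        = |(K z - z * (starRingEnd ℂ) (K z)).re| := by
      rw [Complex.norm_real, Real.norm_eq_abs]
    rw [h3]
    apply mul_le_mul h2 h1 (abs_nonneg _) (inv_nonneg.2 (by linarith))
  rw [hT] at hbnd
  rw [norm_mul, norm_mul, Complex.norm_I, Complex.norm_real, Real.norm_eq_abs,
    abs_of_pos Real.pi_pos, mul_one] at hbnd
  have hπ : (0:ℝ) < Real.pi := Real.pi_pos
  have h5 : 2*Real.pi*r*((r-‖w‖)⁻¹*(1-r^2)) = Real.pi * (2*r*(1-r^2)/(r-‖w‖)) := by ring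
  rw [h5] at hbnd
  exact le_of_mul_le_mul_left hbnd hπ

private lemma mainIdentity {K : ℂ → ℂ} (hK : DifferentiableOn ℂ K (ball (0:ℂ) 1))
    (hb : ∀ z ∈ ball (0:ℂ) 1, |(K z - z * (starRingEnd ℂ) (K z)).re| ≤ 1 - Complex.normSq z)
    {w : ℂ} (hw : w ∈ ball (0:ℂ) 1) :
    (1-w) * K w = K 0 + w * (1-w) * (starRingEnd ℂ) (K 0)
      - w * (starRingEnd ℂ) (deriv K 0) := by
  rcases eq_or_ne w 0 with rfl | hw0
  · simp
  have hw1 : ‖w‖ < 1 := mem_ball_zero_iff.1 hw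
  set E : ℝ → ℂ := fun r => (1 - (r:ℂ)^2/w) * K w + ((r:ℂ)^2/w) * K 0
      + (1-w) * (starRingEnd ℂ) (K 0) - (r:ℂ)^2 * (starRingEnd ℂ) (deriv K 0) with hE
  have hcont : Tendsto (fun r : ℝ => ‖E r‖) (𝓝[<] (1:ℝ)) (𝓝 ‖E 1‖) := by
    apply Tendsto.mono_left _ nhdsWithin_le_nhds
    apply Continuous.tendsto
    apply Continuous.norm
    fun_prop
  have hlim2 : Tendsto (fun r : ℝ => 2*r*(1-r^2)/(r-‖w‖)) (𝓝[<] (1:ℝ)) (𝓝 0) := by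
    have : ContinuousAt (fun r : ℝ => 2*r*(1-r^2)/(r-‖w‖)) 1 := by
      apply ContinuousAt.div (by fun_prop) (by fun_prop)
      simp only [ne_eq]
      intro h
      have : ‖w‖ = 1 := by linarith
      linarith
    have h0 : (2*(1:ℝ)*(1-1^2)/(1-‖w‖)) = 0 := by norm_num
    have := this.tendsto
    rw [h0] at this
    exact this.mono_left nhdsWithin_le_nhds
  have hev : ∀ᶠ r in 𝓝[<] (1:ℝ), ‖E r‖ ≤ 2*r*(1-r^2)/(r-‖w‖) := by
    filter_upwards [Ioo_mem_nhdsLT_of_mem (⟨hw1, le_refl 1⟩ : (1:ℝ) ∈ Ioc ‖w‖ 1)] with r hr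
    exact keyBound hK hb hw0 hr.1 hr.2
  have h0 : ‖E 1‖ ≤ 0 := le_of_tendsto_of_tendsto hcont hlim2 hev
  have hE1 : E 1 = 0 := norm_le_zero_iff.1 h0
  rw [hE] at hE1
  simp only [Complex.ofReal_one, one_pow] at hE1
  field_simp [hw0] at hE1
  linear_combination -hE1

/-- If `F` maps the open unit disc into the strip `{0 ≤ Re z ≤ 1}` and
`z ↦ F z + z * conj (F z)` is holomorphic on the disc, then `F` is constant on the disc. -/
theorem stmt_0 (F : ℂ → ℂ)
    (hre : ∀ z ∈ Metric.ball (0 : ℂ) 1, 0 ≤ (F z).re ∧ (F z).re ≤ 1)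
    (hhol : ∀ z ∈ Metric.ball (0 : ℂ) 1,
      DifferentiableAt ℂ (fun w => F w + w * (starRingEnd ℂ) (F w)) z) :
    ∃ c : ℂ, ∀ z ∈ Metric.ball (0 : ℂ) 1, F z = c := by
  set K : ℂ → ℂ := fun w => F w + w * (starRingEnd ℂ) (F w) with hKdef
  have hK : DifferentiableOn ℂ K (ball 0 1) := fun z hz => (hhol z hz).differentiableWithinAt
  have hUF : ∀ z : ℂ, K z - z * (starRingEnd ℂ) (K z) = (1 - z * (starRingEnd ℂ) z) * F z := by
    intro z
    simp only [hKdef, map_add, map_mul, conj_conj]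
    ring
  have hb : ∀ z ∈ ball (0:ℂ) 1, |(K z - z * (starRingEnd ℂ) (K z)).re| ≤ 1 - Complex.normSq z := by
    intro z hz
    have h1 : Complex.normSq z < 1 := by
      have h2 : ‖z‖ < 1 := mem_ball_zero_iff.1 hz
      rw [← Complex.sq_norm]
      nlinarith [norm_nonneg z]
    obtain ⟨h2, h3⟩ := hre z hz
    rw [hUF z, show ((1:ℂ) - z * (starRingEnd ℂ) z) = ((1 - Complex.normSq z : ℝ) : ℂ) by
      rw [Complex.mul_conj]; push_cast; ring]
    rw [Complex.re_ofReal_mul, abs_mul, _root_.abs_of_nonneg (by linarith : (0:ℝ) ≤ 1 - Complex.normSq z)]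
    nlinarith [abs_le.2 ⟨(by linarith : -(1:ℝ) ≤ (F z).re), h3⟩]
  have hid : ∀ w ∈ ball (0:ℂ) 1, (1-w) * K w
      = K 0 + w * (1-w) * (starRingEnd ℂ) (K 0) - w * (starRingEnd ℂ) (deriv K 0) :=
    fun w hw => mainIdentity hK hb hw
  set A := K 0 with hA
  set B := deriv K 0 with hB
  have h0mem : (0:ℂ) ∈ ball (0:ℂ) 1 := mem_ball_self one_pos
  have hd1 : HasDerivAt (fun w : ℂ => (1-w) * K w) (B - A) 0 := by
    have hKd : HasDerivAt K B 0 :=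
      (hK.differentiableAt (isOpen_ball.mem_nhds h0mem)).hasDerivAt
    have h : HasDerivAt (fun w : ℂ => (1-w) * K w) _ 0 :=
      ((hasDerivAt_const (0:ℂ) (1:ℂ)).sub (hasDerivAt_id 0)).mul hKd
    convert h using 1
    simp
    ring
  have hd2 : HasDerivAt (fun w : ℂ => A + w * (1-w) * (starRingEnd ℂ) A
      - w * (starRingEnd ℂ) B) ((starRingEnd ℂ) A - (starRingEnd ℂ) B) 0 := by
    have h1 : HasDerivAt (fun w : ℂ => w * (1-w)) 1 0 := by
      have : HasDerivAt (fun w : ℂ => w * (1-w)) _ 0 :=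
        (hasDerivAt_id (0:ℂ)).mul ((hasDerivAt_const (0:ℂ) (1:ℂ)).sub (hasDerivAt_id 0))
      simpa using this
    have h2 := (h1.mul_const ((starRingEnd ℂ) A)).const_add A
    have h3 := (hasDerivAt_id (0:ℂ)).mul_const ((starRingEnd ℂ) B)
    refine HasDerivAt.congr_deriv (h2.sub h3 : HasDerivAt (fun w : ℂ => A + w * (1-w) * (starRingEnd ℂ) A
      - w * (starRingEnd ℂ) B) _ 0) ?_
    simp
  have hderiv_eq : B - A = (starRingEnd ℂ) A - (starRingEnd ℂ) B := by
    have hEv : (fun w : ℂ => (1-w) * K w)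
        =ᶠ[𝓝 (0:ℂ)] (fun w => A + w * (1-w) * (starRingEnd ℂ) A - w * (starRingEnd ℂ) B) := by
      filter_upwards [isOpen_ball.mem_nhds h0mem] with w hw
      exact hid w hw
    rw [← hd1.deriv, ← hd2.deriv]
    exact hEv.deriv_eq
  have hReAB : A.re = B.re := by
    have := congrArg Complex.re hderiv_eq
    simp only [Complex.sub_re, Complex.conj_re] at this
    linarith
  have hA0 : A = F 0 := by simp [hA, hKdef]
  have hAre : 0 ≤ A.re ∧ A.re ≤ 1 := by rw [hA0]; exact hre 0 h0mem
  set s := A.im + B.im with hs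
  have hkey : ∀ m : ℝ, 0 < m → m ≤ 1/2 → |s| ≤ 2*m := by
    intro m hm0 hm1
    set z : ℂ := ((1-m : ℝ):ℂ) + (m:ℝ) * I with hzdef
    have hzre : z.re = 1 - m := by simp [hzdef]
    have hzim : z.im = m := by simp [hzdef]
    have hnsq : Complex.normSq z = (1-m)^2 + m^2 := by
      rw [Complex.normSq_apply, hzre, hzim]; ring
    have hzmem : z ∈ ball (0:ℂ) 1 := by
      rw [mem_ball_zero_iff]
      have h1 : ‖z‖^2 = (1-m)^2 + m^2 := by
        rw [Complex.sq_norm, hnsq]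
      nlinarith [norm_nonneg z]
    have hconj : (starRingEnd ℂ) z = ((1-m : ℝ):ℂ) - (m:ℝ) * I := by
      rw [hzdef, map_add, map_mul, Complex.conj_ofReal, Complex.conj_ofReal, conj_I]
      ring
    have e1 := hid z hzmem
    have e2 : (1 - (starRingEnd ℂ) z) * (starRingEnd ℂ) (K z)
        = (starRingEnd ℂ) A + (starRingEnd ℂ) z * (1 - (starRingEnd ℂ) z) * A
          - (starRingEnd ℂ) z * B := by
      have := congrArg (starRingEnd ℂ) e1
      simpa only [map_mul, map_sub, map_add, map_one, conj_conj] using this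
    set Q : ℂ := (1 - (starRingEnd ℂ) z) * (A + z * (1-z) * (starRingEnd ℂ) A
        - z * (starRingEnd ℂ) B)
      - z * (1-z) * ((starRingEnd ℂ) A + (starRingEnd ℂ) z * (1 - (starRingEnd ℂ) z) * A
        - (starRingEnd ℂ) z * B) with hQdef
    have hQ : F z * ((1 - z * (starRingEnd ℂ) z) * ((1-z) * (1 - (starRingEnd ℂ) z))) = Q := by
      rw [hQdef]
      linear_combination (-((1-z) * (1 - (starRingEnd ℂ) z))) * hUF z
        + (1 - (starRingEnd ℂ) z) * e1 - (z * (1-z)) * e2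
    set d : ℝ := 4*m^3*(1-m) with hddef
    have hdpos : 0 < d := by
      rw [hddef]
      have h3 : 0 < m^3 := pow_pos hm0 3
      nlinarith
    have hD : ((1:ℂ) - z * (starRingEnd ℂ) z) * ((1-z) * (1 - (starRingEnd ℂ) z)) = (d:ℝ) := by
      rw [hconj, hzdef, hddef]
      apply Complex.ext
      · simp [Complex.mul_re, Complex.mul_im, ← Complex.ofReal_pow]
        ring
      · simp [Complex.mul_re, Complex.mul_im, ← Complex.ofReal_pow]
        try ring
        try tauto
    have hFz : F z = Q / (d : ℝ) := by
      rw [eq_div_iff (by exact_mod_cast hdpos.ne' : ((d:ℝ):ℂ) ≠ 0), ← hD, hQ]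
    have hQre : Q.re = d * A.re - 2*(1-m)*m^2*s := by
      rw [hQdef, hconj, hzdef, hddef, hs]
      simp only [Complex.mul_re, Complex.mul_im, Complex.add_re, Complex.add_im,
        Complex.sub_re, Complex.sub_im, Complex.one_re, Complex.one_im,
        Complex.ofReal_re, Complex.ofReal_im, Complex.I_re, Complex.I_im,
        Complex.conj_re, Complex.conj_im]
      rw [← hReAB]
      ring
    have hFre : (F z).re = A.re - s/(2*m) := by
      rw [hFz, Complex.div_ofReal_re, hQre, hddef]
      have : (1:ℝ) - m ≠ 0 := by linarith
      field_simp
      ring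
    obtain ⟨hb1, hb2⟩ := hre z hzmem
    rw [hFre] at hb1 hb2
    have h2m : (0:ℝ) < 2*m := by linarith
    have hu : s ≤ A.re * (2*m) := by
      rw [← div_le_iff₀ h2m]; linarith
    have hl : (A.re - 1) * (2*m) ≤ s := by
      rw [← le_div_iff₀ h2m]; linarith
    rw [abs_le]
    constructor <;> nlinarith [hAre.1, hAre.2]
  have hs0 : s = 0 := by
    by_contra hne
    have habs : 0 < |s| := abs_pos.2 hne
    have h1 := hkey (min (1/2) (|s|/4)) (lt_min (by norm_num) (by positivity)) (min_le_left _ _)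
    have h2 : min (1/2) (|s|/4) ≤ |s|/4 := min_le_right _ _
    linarith
  have hBA : B = (starRingEnd ℂ) A := by
    apply Complex.ext
    · rw [Complex.conj_re]; exact hReAB.symm
    · rw [Complex.conj_im]; rw [hs] at hs0; linarith
  refine ⟨F 0, fun z hz => ?_⟩
  have hz1 : ‖z‖ < 1 := mem_ball_zero_iff.1 hz
  have e1 := hid z hz
  rw [hBA, conj_conj] at e1
  have e2 : (1 - (starRingEnd ℂ) z) * (starRingEnd ℂ) (K z)
      = (starRingEnd ℂ) A + (starRingEnd ℂ) z * (1 - (starRingEnd ℂ) z) * A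
        - (starRingEnd ℂ) z * (starRingEnd ℂ) A := by
    have := congrArg (starRingEnd ℂ) e1
    simpa only [map_mul, map_sub, map_add, map_one, conj_conj] using this
  have hne1 : (1:ℂ) - z ≠ 0 := by
    intro h
    have : z = 1 := by linear_combination -h
    rw [this] at hz1; simp at hz1
  have hne2 : (1:ℂ) - (starRingEnd ℂ) z ≠ 0 := by
    intro h
    have : (starRingEnd ℂ) z = 1 := by linear_combination -h
    have h2 := congrArg norm this
    rw [Complex.norm_conj] at h2
    rw [h2] at hz1; simp at hz1
  have hne3 : (1:ℂ) - z * (starRingEnd ℂ) z ≠ 0 := by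
    have h1 : Complex.normSq z < 1 := by
      rw [← Complex.sq_norm]
      nlinarith [norm_nonneg z]
    rw [show ((1:ℂ) - z * (starRingEnd ℂ) z) = ((1 - Complex.normSq z : ℝ) : ℂ) by
      rw [Complex.mul_conj]; push_cast; ring]
    exact_mod_cast (by linarith : (1:ℝ) - Complex.normSq z ≠ 0)
  have hfinal : F z * ((1 - z * (starRingEnd ℂ) z) * ((1-z) * (1 - (starRingEnd ℂ) z)))
      = F 0 * ((1 - z * (starRingEnd ℂ) z) * ((1-z) * (1 - (starRingEnd ℂ) z))) := by
    rw [← hA0]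
    linear_combination (-((1-z) * (1 - (starRingEnd ℂ) z))) * hUF z
      + (1 - (starRingEnd ℂ) z) * e1 - (z * (1-z)) * e2
  exact mul_right_cancel₀ (mul_ne_zero hne3 (mul_ne_zero hne1 hne2)) hfinal
end

section
/- Let H be a complex separable Hilbert space and let F : D → B(H) be a function such that for every z ∈ D the real part Re F(z) := (F(z) + F(z)*)/2 is a positive operator satisfying Re F(z) ≤ I, and such that the function z ↦ F(z) + z·F(z)* is holomorphic on D. Then F is constant on D. -/
open ContinuousLinearMap

noncomputable section Stmt1Aux

open Complex Metric Set Filter Topology intervalIntegral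

lemma stmt1_integral_conj {f : ℝ → ℂ} {a b : ℝ} :
    ∫ t in a..b, (starRingEnd ℂ) (f t) = (starRingEnd ℂ) (∫ t in a..b, f t) := by
  simp only [intervalIntegral, ← integral_conj, map_sub]

lemma stmt1_squeeze0 {S q : ℝ → ℝ} {L : ℝ}
    (h0 : ∀ᶠ t in 𝓝[>] (0:ℝ), 0 ≤ S t) (hub : ∀ᶠ t in 𝓝[>] (0:ℝ), S t ≤ q t)
    (hq : Tendsto q (𝓝[>] (0:ℝ)) (𝓝 0)) (hS : Tendsto S (𝓝[>] (0:ℝ)) (𝓝 L)) : L = 0 :=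
  le_antisymm (le_of_tendsto_of_tendsto hS hq hub) (ge_of_tendsto hS h0)

section Scalar

variable {g : ℂ → ℂ}

lemma stmt1_cont_circle (hg : DifferentiableOn ℂ g (ball (0:ℂ) 1)) {r : ℝ}
    (h0 : 0 < r) (h1 : r < 1) : Continuous fun θ : ℝ => g (circleMap 0 r θ) := by
  apply hg.continuousOn.comp_continuous (continuous_circleMap 0 r)
  intro θ
  simp [mem_ball, Complex.dist_eq, abs_of_pos h0, h1]

lemma stmt1_series (hg : DifferentiableOn ℂ g (ball (0:ℂ) 1)) {r : ℝ}
    (h0 : 0 < r) (h1 : r < 1) :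
    HasFPowerSeriesOnBall g (cauchyPowerSeries g 0 r) 0 (ENNReal.ofReal r) := by
  rw [ENNReal.ofReal_eq_coe_nnreal h0.le]
  exact DifferentiableOn.hasFPowerSeriesOnBall (R := ⟨r, h0.le⟩)
    (hg.mono (closedBall_subset_ball (by exact h1))) (by exact_mod_cast h0)

lemma stmt1_coeff_indep (hg : DifferentiableOn ℂ g (ball (0:ℂ) 1)) {r : ℝ}
    (h0 : 0 < r) (h1 : r < 1) :
    cauchyPowerSeries g 0 r = cauchyPowerSeries g 0 (2⁻¹ : ℝ) :=
  (stmt1_series hg h0 h1).hasFPowerSeriesAt.eq_formalMultilinearSeries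
    (stmt1_series hg (by norm_num) (by norm_num)).hasFPowerSeriesAt

lemma stmt1_A1 (hg : DifferentiableOn ℂ g (ball (0:ℂ) 1)) {r : ℝ}
    (h0 : 0 < r) (h1 : r < 1) (n : ℕ) :
    ∫ θ in (0:ℝ)..2 * Real.pi, g (circleMap 0 r θ) * Complex.exp (θ * Complex.I) ^ (n + 1) = 0 := by
  have hsub : closedBall (0:ℂ) r ⊆ ball 0 1 := closedBall_subset_ball (by simpa using h1)
  have hzero : (∮ z in C(0, r), z ^ n * g z) = 0 :=
    Complex.circleIntegral_eq_zero_of_differentiable_on_off_countable h0.le countable_empty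
      ((continuous_pow n).continuousOn.mul (hg.continuousOn.mono hsub))
      (fun z hz => (differentiableAt_pow n).mul
        (hg.differentiableAt (isOpen_ball.mem_nhds (ball_subset_ball h1.le hz.1))))
  have key : ∀ θ : ℝ, deriv (circleMap 0 r) θ • ((circleMap 0 r θ) ^ n * g (circleMap 0 r θ))
      = (Complex.I * (r:ℂ) ^ (n+1)) * (g (circleMap 0 r θ) * Complex.exp (θ * Complex.I) ^ (n + 1)) := by
    intro θ
    simp only [deriv_circleMap, circleMap_zero, smul_eq_mul]
    ring
  rw [circleIntegral] at hzero
  simp only [key] at hzero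
  rw [intervalIntegral.integral_const_mul] at hzero
  have hne : (Complex.I * (r:ℂ) ^ (n+1)) ≠ 0 := by
    simp [Complex.I_ne_zero, pow_ne_zero, ne_of_gt h0, Complex.ofReal_ne_zero]
  exact (mul_eq_zero.mp hzero).resolve_left hne

lemma stmt1_A2 (hg : DifferentiableOn ℂ g (ball (0:ℂ) 1)) {r : ℝ}
    (h0 : 0 < r) (h1 : r < 1) (n : ℕ) :
    ∫ θ in (0:ℝ)..2 * Real.pi, g (circleMap 0 r θ) * Complex.exp (-(θ * Complex.I)) ^ n
      = ((2 * Real.pi * r ^ n : ℝ) : ℂ) * (cauchyPowerSeries g 0 (2⁻¹ : ℝ)).coeff n := by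
  rw [← stmt1_coeff_indep hg h0 h1]
  have hcoeff : (cauchyPowerSeries g 0 r).coeff n
      = (2 * (Real.pi:ℂ) * Complex.I)⁻¹ • ∮ z in C(0, r), (1 / (z - 0)) ^ n • (z - 0)⁻¹ • g z :=
    cauchyPowerSeries_apply g 0 r n 1
  have key : ∀ θ : ℝ, deriv (circleMap 0 r) θ •
        ((1 / (circleMap 0 r θ - 0)) ^ n • (circleMap 0 r θ - 0)⁻¹ • g (circleMap 0 r θ))
      = (Complex.I * ((r:ℂ) ^ n)⁻¹) * (g (circleMap 0 r θ) * Complex.exp (-(θ * Complex.I)) ^ n) := by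
    intro θ
    have hE : Complex.exp (θ * Complex.I) ≠ 0 := Complex.exp_ne_zero _
    have hrne : (r:ℂ) ≠ 0 := Complex.ofReal_ne_zero.mpr (ne_of_gt h0)
    simp only [deriv_circleMap, circleMap_zero, smul_eq_mul, sub_zero, Complex.exp_neg]
    field_simp
    rw [div_pow, div_pow, mul_pow]
    field_simp
  rw [hcoeff, circleIntegral]
  simp only [key]
  rw [intervalIntegral.integral_const_mul]
  have hπ : (Real.pi : ℂ) ≠ 0 := Complex.ofReal_ne_zero.mpr Real.pi_ne_zero
  have hrne : (r:ℂ) ≠ 0 := Complex.ofReal_ne_zero.mpr (ne_of_gt h0)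
  generalize (∫ θ in (0:ℝ)..2 * Real.pi, g (circleMap 0 r θ) * Complex.exp (-(θ * Complex.I)) ^ n) = J
  push_cast
  rw [smul_eq_mul]
  field_simp

lemma stmt1_Ik (hg : DifferentiableOn ℂ g (ball (0:ℂ) 1)) {r : ℝ}
    (h0 : 0 < r) (h1 : r < 1) (m : ℕ) :
    ∫ θ in (0:ℝ)..2 * Real.pi,
        (((1 - (starRingEnd ℂ) (circleMap 0 r θ)) * g (circleMap 0 r θ)).re : ℂ)
          * Complex.exp (-(θ * Complex.I)) ^ (m + 2)
      = (Real.pi : ℂ) * ((cauchyPowerSeries g 0 (2⁻¹ : ℝ)).coeff (m+2) * (r:ℂ) ^ (m+2)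
          - (cauchyPowerSeries g 0 (2⁻¹ : ℝ)).coeff (m+3) * (r:ℂ) ^ (m+4)) := by
  have hc : Continuous fun θ : ℝ => g (circleMap 0 r θ) := stmt1_cont_circle hg h0 h1
  have key : ∀ θ : ℝ,
      (((1 - (starRingEnd ℂ) (circleMap 0 r θ)) * g (circleMap 0 r θ)).re : ℂ)
          * Complex.exp (-(θ * Complex.I)) ^ (m + 2)
      = (2⁻¹ : ℂ) * (((g (circleMap 0 r θ) * Complex.exp (-(θ * Complex.I)) ^ (m+2)
              - (r:ℂ) * (g (circleMap 0 r θ) * Complex.exp (-(θ * Complex.I)) ^ (m+3)))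
          + (starRingEnd ℂ) (g (circleMap 0 r θ) * Complex.exp (θ * Complex.I) ^ (m+2)
              - (r:ℂ) * (g (circleMap 0 r θ) * Complex.exp (θ * Complex.I) ^ (m+1))))) := by
    intro θ
    have hE : Complex.exp (θ * Complex.I) ≠ 0 := Complex.exp_ne_zero _
    have hre : ∀ w : ℂ, ((w.re : ℂ)) = (w + (starRingEnd ℂ) w) * 2⁻¹ := fun w => by
      rw [Complex.add_conj]; push_cast; ring
    have hconjE : (starRingEnd ℂ) (Complex.exp (θ * Complex.I))
        = (Complex.exp (θ * Complex.I))⁻¹ := by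
      rw [← Complex.exp_conj, ← Complex.exp_neg]
      congr 1
      simp [Complex.conj_I, Complex.conj_ofReal]
    rw [hre]
    simp only [circleMap_zero, Complex.exp_neg, map_mul, map_sub, map_one, map_pow, hconjE,
      Complex.conj_ofReal, inv_inv, map_inv₀]
    generalize g (↑r * Complex.exp (↑θ * Complex.I)) = G
    field_simp
    linear_combination (r * G * (Complex.exp (θ * Complex.I))⁻¹ ^ 2 * (Complex.exp (θ * Complex.I))⁻¹ ^ m
      - r * (starRingEnd ℂ) G * (Complex.exp (θ * Complex.I))⁻¹ * (Complex.exp (θ * Complex.I))⁻¹ ^ m * Complex.exp (θ * Complex.I)) * (mul_inv_cancel₀ hE)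
  have hcE : Continuous fun θ : ℝ => Complex.exp (θ * Complex.I) := by
    apply Complex.continuous_exp.comp; fun_prop
  have hcE' : Continuous fun θ : ℝ => Complex.exp (-(θ * Complex.I)) := by
    apply Complex.continuous_exp.comp; fun_prop
  have i1 : IntervalIntegrable (fun θ : ℝ => g (circleMap 0 r θ)
      * Complex.exp (-(θ * Complex.I)) ^ (m+2)) MeasureTheory.volume 0 (2*Real.pi) :=
    (hc.mul (hcE'.pow _)).intervalIntegrable _ _
  have i2 : IntervalIntegrable (fun θ : ℝ => (r:ℂ) * (g (circleMap 0 r θ)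
      * Complex.exp (-(θ * Complex.I)) ^ (m+3))) MeasureTheory.volume 0 (2*Real.pi) :=
    (continuous_const.mul (hc.mul (hcE'.pow _))).intervalIntegrable _ _
  have i3 : IntervalIntegrable (fun θ : ℝ => (starRingEnd ℂ)
      (g (circleMap 0 r θ) * Complex.exp (θ * Complex.I) ^ (m+2)
        - (r:ℂ) * (g (circleMap 0 r θ) * Complex.exp (θ * Complex.I) ^ (m+1))))
      MeasureTheory.volume 0 (2*Real.pi) := by
    apply Continuous.intervalIntegrable
    exact Complex.continuous_conj.comp
      ((hc.mul (hcE.pow _)).sub (continuous_const.mul (hc.mul (hcE.pow _))))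
  have j1 : IntervalIntegrable (fun θ : ℝ => g (circleMap 0 r θ)
      * Complex.exp (θ * Complex.I) ^ (m+2)) MeasureTheory.volume 0 (2*Real.pi) :=
    (hc.mul (hcE.pow _)).intervalIntegrable _ _
  have j2 : IntervalIntegrable (fun θ : ℝ => (r:ℂ) * (g (circleMap 0 r θ)
      * Complex.exp (θ * Complex.I) ^ (m+1))) MeasureTheory.volume 0 (2*Real.pi) :=
    (continuous_const.mul (hc.mul (hcE.pow _))).intervalIntegrable _ _
  simp only [key]
  rw [intervalIntegral.integral_const_mul, intervalIntegral.integral_add (i1.sub i2) i3,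
    intervalIntegral.integral_sub i1 i2, stmt1_integral_conj, intervalIntegral.integral_sub j1 j2,
    intervalIntegral.integral_const_mul, intervalIntegral.integral_const_mul]
  rw [stmt1_A2 hg h0 h1 (m+2), stmt1_A2 hg h0 h1 (m+3), stmt1_A1 hg h0 h1 (m+1),
    stmt1_A1 hg h0 h1 m]
  simp only [mul_zero, sub_zero, map_zero]
  push_cast
  ring

end Scalar

/-- The scalar core lemma. -/
lemma stmt1_scalar {f : ℂ → ℂ} {M : ℝ}
    (hre0 : ∀ z ∈ ball (0:ℂ) 1, 0 ≤ (f z).re)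
    (hreM : ∀ z ∈ ball (0:ℂ) 1, (f z).re ≤ M)
    (hhol : DifferentiableOn ℂ (fun w => f w + w * (starRingEnd ℂ) (f w)) (ball (0:ℂ) 1)) :
    ∀ z ∈ ball (0:ℂ) 1, f z = f 0 := by
  set g : ℂ → ℂ := fun w => f w + w * (starRingEnd ℂ) (f w) with hgdef
  have hg : DifferentiableOn ℂ g (ball 0 1) := hhol
  set b : ℕ → ℂ := fun n => (cauchyPowerSeries g 0 (2⁻¹ : ℝ)).coeff n with hbdef
  -- the fundamental real-part identity
  have sEq : ∀ z : ℂ, ((1 - (starRingEnd ℂ) z) * g z).re = (1 - Complex.normSq z) * (f z).re := by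
    intro z
    simp only [hgdef]
    simp only [Complex.mul_re, Complex.mul_im, Complex.sub_re, Complex.sub_im, Complex.add_re,
      Complex.add_im, Complex.one_re, Complex.one_im, Complex.conj_re, Complex.conj_im,
      Complex.normSq_apply]
    ring
  have hball : ∀ z : ℂ, z ∈ ball (0:ℂ) 1 → Complex.normSq z < 1 := by
    intro z hz
    rw [← Complex.sq_norm]
    have h := mem_ball_zero_iff.mp hz
    nlinarith [norm_nonneg z]
  have sBound : ∀ z ∈ ball (0:ℂ) 1, 0 ≤ ((1 - (starRingEnd ℂ) z) * g z).re ∧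
      ((1 - (starRingEnd ℂ) z) * g z).re ≤ M * (1 - Complex.normSq z) := by
    intro z hz
    rw [sEq]
    have h2 : 0 ≤ 1 - Complex.normSq z := by linarith [hball z hz]
    constructor
    · exact mul_nonneg h2 (hre0 _ hz)
    · calc (1 - Complex.normSq z) * (f z).re ≤ (1 - Complex.normSq z) * M :=
            mul_le_mul_of_nonneg_left (hreM _ hz) h2
        _ = M * (1 - Complex.normSq z) := by ring
  -- Fourier estimate : coefficients from index 2 on are all equal
  have hcoeffEq : ∀ m : ℕ, b (m+3) = b (m+2) := by
    intro m
    have bound : ∀ r ∈ Ioo (0:ℝ) 1,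
        ‖(Real.pi : ℂ) * (b (m+2) * (r:ℂ) ^ (m+2) - b (m+3) * (r:ℂ) ^ (m+4))‖
          ≤ (M * (1 - r^2)) * |2 * Real.pi - 0| := by
      rintro r ⟨h0, h1⟩
      rw [← stmt1_Ik hg h0 h1 m]
      apply intervalIntegral.norm_integral_le_of_norm_le_const
      intro θ _
      have hmem : circleMap 0 r θ ∈ ball (0:ℂ) 1 := by
        simp [mem_ball, Complex.dist_eq, abs_of_pos h0, h1]
      have hns : Complex.normSq (circleMap 0 r θ) = r ^ 2 := by
        rw [Complex.normSq_eq_norm_sq, norm_circleMap_zero, abs_of_pos h0]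
      have h2 := sBound _ hmem
      rw [norm_mul, norm_pow]
      have hexp1 : ‖Complex.exp (-(θ * Complex.I))‖ = 1 := by
        rw [Complex.norm_exp]
        simp
      rw [hexp1, one_pow, mul_one, Complex.norm_real, Real.norm_eq_abs,
        _root_.abs_of_nonneg h2.1]
      calc ((1 - (starRingEnd ℂ) (circleMap 0 r θ)) * g (circleMap 0 r θ)).re
          ≤ M * (1 - Complex.normSq (circleMap 0 r θ)) := h2.2
        _ = M * (1 - r^2) := by rw [hns]
    have ht1 : Tendsto (fun r : ℝ =>
        ‖(Real.pi : ℂ) * (b (m+2) * (r:ℂ) ^ (m+2) - b (m+3) * (r:ℂ) ^ (m+4))‖)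
        (𝓝[<] (1:ℝ)) (𝓝 ‖(Real.pi : ℂ) * (b (m+2) - b (m+3))‖) := by
      have hcont : Continuous fun r : ℝ =>
          ‖(Real.pi : ℂ) * (b (m+2) * (r:ℂ) ^ (m+2) - b (m+3) * (r:ℂ) ^ (m+4))‖ := by
        fun_prop
      have := (hcont.tendsto 1).mono_left (nhdsWithin_le_nhds (s := Iio (1:ℝ)))
      simpa using this
    have ht2 : Tendsto (fun r : ℝ => (M * (1 - r^2)) * |2 * Real.pi - 0|)
        (𝓝[<] (1:ℝ)) (𝓝 0) := by
      have hcont : Continuous fun r : ℝ => (M * (1 - r^2)) * |2 * Real.pi - 0| := by fun_prop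
      have := (hcont.tendsto 1).mono_left (nhdsWithin_le_nhds (s := Iio (1:ℝ)))
      simpa using this
    have hev : ∀ᶠ (r : ℝ) in 𝓝[<] (1:ℝ),
        ‖(Real.pi : ℂ) * (b (m+2) * (r:ℂ) ^ (m+2) - b (m+3) * (r:ℂ) ^ (m+4))‖
          ≤ (M * (1 - r^2)) * |2 * Real.pi - 0| := by
      filter_upwards [Ioo_mem_nhdsLT (by norm_num : (0:ℝ) < 1)] with r hr
      exact bound r hr
    have hle0 : ‖(Real.pi : ℂ) * (b (m+2) - b (m+3))‖ ≤ 0 := le_of_tendsto_of_tendsto ht1 ht2 hev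
    have hzero : (Real.pi : ℂ) * (b (m+2) - b (m+3)) = 0 := norm_le_zero_iff.mp hle0
    have hπ : (Real.pi : ℂ) ≠ 0 := Complex.ofReal_ne_zero.mpr Real.pi_ne_zero
    have := (mul_eq_zero.mp hzero).resolve_left hπ
    exact (sub_eq_zero.mp this).symm
  have hbc : ∀ n : ℕ, b (n+2) = b 2 := by
    intro n
    induction n with
    | zero => rfl
    | succ n ih => exact (hcoeffEq n).trans ih
  -- closed form on the ball
  have hclosed : ∀ z ∈ ball (0:ℂ) 1, g z = b 0 + b 1 * z + b 2 * z^2 * (1 - z)⁻¹ := by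
    intro z hz
    have habs : ‖z‖ < 1 := by simpa [mem_ball, Complex.dist_eq] using hz
    set r : ℝ := (‖z‖ + 1) / 2 with hrdef
    have h0 : 0 < r := by positivity
    have hzr : ‖z‖ < r := by rw [hrdef]; linarith
    have h1 : r < 1 := by rw [hrdef]; linarith
    have hser := stmt1_series hg h0 h1
    have hmem : z ∈ EMetric.ball (0:ℂ) (ENNReal.ofReal r) := by
      rw [EMetric.ball, Metric.mem_eball, edist_dist]
      exact (ENNReal.ofReal_lt_ofReal_iff h0).mpr (by simpa [Complex.dist_eq] using hzr)
    have hs1 : HasSum (fun n : ℕ => z ^ n * b n) (g z) := by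
      have := hser.hasSum hmem
      simp only [FormalMultilinearSeries.apply_eq_pow_smul_coeff, zero_add,
        stmt1_coeff_indep hg h0 h1, smul_eq_mul] at this
      exact this
    have hgeo : HasSum (fun n : ℕ => b 2 * z^2 * z ^ n) (b 2 * z^2 * (1 - z)⁻¹) :=
      (hasSum_geometric_of_norm_lt_one habs).mul_left _
    have heq : (fun n : ℕ => z ^ (n + 2) * b (n + 2)) = fun n : ℕ => b 2 * z^2 * z ^ n := by
      funext n
      have hb2 : b (n + 2) = b 2 := hbc n
      rw [hb2]
      ring
    have hs2 : HasSum (fun n : ℕ => z ^ n * b n)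
        (b 2 * z^2 * (1 - z)⁻¹ + ∑ i ∈ Finset.range 2, z ^ i * b i) := by
      apply (hasSum_nat_add_iff 2).mp
      rw [show (fun n : ℕ => z ^ (n + 2) * b (n + 2)) = fun n : ℕ => b 2 * z^2 * z ^ n from heq]
      exact hgeo
    have := hs1.unique hs2
    rw [this]
    simp [Finset.sum_range_succ]
    ring
  -- path-limit principle
  have pathlim : ∀ (γ : ℝ → ℂ) (L : ℝ),
      (∀ᶠ t in 𝓝[>] (0:ℝ), γ t ∈ ball (0:ℂ) 1) →
      Tendsto (fun t => Complex.normSq (γ t)) (𝓝[>] (0:ℝ)) (𝓝 1) →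
      Tendsto (fun t => ((1 - (starRingEnd ℂ) (γ t)) * g (γ t)).re) (𝓝[>] (0:ℝ)) (𝓝 L) →
      L = 0 := by
    intro γ L hmem hns hS
    have h0 : ∀ᶠ t in 𝓝[>] (0:ℝ), 0 ≤ ((1 - (starRingEnd ℂ) (γ t)) * g (γ t)).re := by
      filter_upwards [hmem] with t ht
      exact (sBound _ ht).1
    have hub : ∀ᶠ t in 𝓝[>] (0:ℝ), ((1 - (starRingEnd ℂ) (γ t)) * g (γ t)).re
        ≤ M * (1 - Complex.normSq (γ t)) := by
      filter_upwards [hmem] with t ht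
      exact (sBound _ ht).2
    have hq : Tendsto (fun t => M * (1 - Complex.normSq (γ t))) (𝓝[>] (0:ℝ)) (𝓝 0) := by
      have : Tendsto (fun t => M * (1 - Complex.normSq (γ t))) (𝓝[>] (0:ℝ)) (𝓝 (M * (1 - 1))) :=
        tendsto_const_nhds.mul (tendsto_const_nhds.sub hns)
      simpa using this
    exact stmt1_squeeze0 h0 hub hq hS

  have hIoo : Ioo (0:ℝ) 1 ∈ 𝓝[>] (0:ℝ) :=
    Ioo_mem_nhdsGT (by norm_num : (0:ℝ) < 1)
  have hball' : ∀ z : ℂ, Complex.normSq z < 1 → z ∈ ball (0:ℂ) 1 := by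
    intro z hz
    rw [mem_ball_zero_iff]
    nlinarith [Complex.sq_norm z, norm_nonneg z]
  -- radial path to 1 : Re (b 2) = 0
  have hre_b2 : (b 2).re = 0 := by
    set γ : ℝ → ℂ := fun t => ((1 - t : ℝ) : ℂ) with hγdef
    have hmem : ∀ᶠ t in 𝓝[>] (0:ℝ), γ t ∈ ball (0:ℂ) 1 := by
      filter_upwards [hIoo] with t ht
      rw [hγdef, mem_ball_zero_iff]
      simp only [Complex.norm_real, Real.norm_eq_abs]
      rw [_root_.abs_of_nonneg (by linarith [ht.2])]
      linarith [ht.1]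
    have hns : Tendsto (fun t => Complex.normSq (γ t)) (𝓝[>] (0:ℝ)) (𝓝 1) := by
      have hcont : Continuous fun t : ℝ => Complex.normSq (γ t) := by
        apply Complex.continuous_normSq.comp
        fun_prop
      have := (hcont.tendsto 0).mono_left (nhdsWithin_le_nhds (s := Ioi (0:ℝ)))
      simpa [hγdef] using this
    have hSc : Tendsto (fun t : ℝ => (((t:ℂ)) * (b 0 + b 1 * γ t) + b 2 * (γ t)^2).re)
        (𝓝[>] (0:ℝ)) (𝓝 ((b 2).re)) := by
      have hcont : Continuous fun t : ℝ =>
          (((t:ℂ)) * (b 0 + b 1 * γ t) + b 2 * (γ t)^2).re := by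
        apply Complex.continuous_re.comp
        fun_prop
      have := (hcont.tendsto 0).mono_left (nhdsWithin_le_nhds (s := Ioi (0:ℝ)))
      simpa [hγdef] using this
    have hSeq : (fun t : ℝ => (((t:ℂ)) * (b 0 + b 1 * γ t) + b 2 * (γ t)^2).re)
        =ᶠ[𝓝[>] (0:ℝ)] fun t => ((1 - (starRingEnd ℂ) (γ t)) * g (γ t)).re := by
      filter_upwards [hIoo, hmem] with t ht hmt
      rw [hclosed _ hmt]
      have hco : (starRingEnd ℂ) (γ t) = γ t := Complex.conj_ofReal _
      have h1 : (1:ℂ) - γ t = (t:ℂ) := by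
        rw [hγdef]
        push_cast
        ring
      rw [hco, h1]
      have ht0 : (t:ℂ) ≠ 0 := by exact_mod_cast ne_of_gt ht.1
      congr 1
      field_simp
    exact pathlim γ _ hmem hns (hSc.congr' hSeq)
  -- tangential path to 1 : Im (b 2) = 0
  have him_b2 : (b 2).im = 0 := by
    set a : ℝ := (Real.sqrt 2)⁻¹ with hadef
    have hs2 : (Real.sqrt 2) ^ 2 = 2 := Real.sq_sqrt (by norm_num)
    have hs2pos : 0 < Real.sqrt 2 := Real.sqrt_pos.mpr (by norm_num)
    have ha0 : 0 < a := inv_pos.mpr hs2pos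
    have ha2 : a^2 = 2⁻¹ := by rw [hadef, inv_pow, hs2]
    have h2a : 1 < 2 * a := by nlinarith
    set e : ℂ := (a:ℂ) + (a:ℂ) * Complex.I with hedef
    have hnse : Complex.normSq e = 1 := by
      rw [hedef]
      simp [Complex.normSq_apply]
      nlinarith
    have hee : e * (starRingEnd ℂ) e = 1 := by
      rw [Complex.mul_conj, hnse]
      simp
    have he0 : e ≠ 0 := left_ne_zero_of_mul_eq_one hee
    have hce : (starRingEnd ℂ) e = e⁻¹ := (inv_eq_of_mul_eq_one_right hee).symm
    have he2 : e * e = Complex.I := by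
      rw [hedef]
      apply Complex.ext <;>
        simp [Complex.mul_re, Complex.mul_im, Complex.add_re, Complex.add_im] <;>
        nlinarith
    have hinv2 : e⁻¹ * e⁻¹ = -Complex.I := by
      rw [← hce, ← map_mul, he2, Complex.conj_I]
    set γ : ℝ → ℂ := fun t => 1 - (t:ℂ) * e with hγdef
    have hnsγ : ∀ t : ℝ, Complex.normSq (γ t) = 1 - 2*a*t + t^2 := by
      intro t
      rw [hγdef]
      simp [Complex.normSq_apply, hedef, Complex.mul_re, Complex.mul_im]
      nlinarith
    have hmem : ∀ᶠ t in 𝓝[>] (0:ℝ), γ t ∈ ball (0:ℂ) 1 := by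
      filter_upwards [hIoo] with t ht
      apply hball'
      rw [hnsγ]
      have hpos : 0 < t * (2*a - t) := mul_pos ht.1 (by linarith [ht.2])
      nlinarith
    have hns : Tendsto (fun t => Complex.normSq (γ t)) (𝓝[>] (0:ℝ)) (𝓝 1) := by
      have hcont : Continuous fun t : ℝ => Complex.normSq (γ t) := by
        apply Complex.continuous_normSq.comp
        fun_prop
      have := (hcont.tendsto 0).mono_left (nhdsWithin_le_nhds (s := Ioi (0:ℝ)))
      simpa [hγdef] using this
    have hSc : Tendsto
        (fun t : ℝ => (((t:ℂ)) * e⁻¹ * (b 0 + b 1 * γ t) + b 2 * (γ t)^2 * (e⁻¹ * e⁻¹)).re)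
        (𝓝[>] (0:ℝ)) (𝓝 ((b 2).im)) := by
      have hcont : Continuous fun t : ℝ =>
          (((t:ℂ)) * e⁻¹ * (b 0 + b 1 * γ t) + b 2 * (γ t)^2 * (e⁻¹ * e⁻¹)).re := by
        apply Complex.continuous_re.comp
        fun_prop
      have h := (hcont.tendsto 0).mono_left (nhdsWithin_le_nhds (s := Ioi (0:ℝ)))
      have hv : (((0:ℝ):ℂ) * e⁻¹ * (b 0 + b 1 * γ 0) + b 2 * (γ 0)^2 * (e⁻¹ * e⁻¹)).re
          = (b 2).im := by
        rw [hinv2, hγdef]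
        simp [Complex.mul_re]
      rw [hv] at h
      exact h
    have hSeq : (fun t : ℝ => (((t:ℂ)) * e⁻¹ * (b 0 + b 1 * γ t) + b 2 * (γ t)^2 * (e⁻¹ * e⁻¹)).re)
        =ᶠ[𝓝[>] (0:ℝ)] fun t => ((1 - (starRingEnd ℂ) (γ t)) * g (γ t)).re := by
      filter_upwards [hIoo, hmem] with t ht hmt
      rw [hclosed _ hmt]
      have hcoγ : (starRingEnd ℂ) (γ t) = 1 - (t:ℂ) * e⁻¹ := by
        rw [hγdef]
        rw [map_sub, map_mul, map_one, Complex.conj_ofReal, hce]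
      have h1 : (1:ℂ) - γ t = (t:ℂ) * e := by
        rw [hγdef]
        ring
      rw [hcoγ, h1]
      have ht0 : (t:ℂ) ≠ 0 := by exact_mod_cast ne_of_gt ht.1
      congr 1
      field_simp
      ring
    exact pathlim γ _ hmem hns (hSc.congr' hSeq)
  have hc2 : b 2 = 0 := by
    apply Complex.ext <;> simp [hre_b2, him_b2]
  have hclosed2 : ∀ z ∈ ball (0:ℂ) 1, g z = b 0 + b 1 * z := by
    intro z hz
    rw [hclosed z hz, hc2]
    ring
  -- radial limits : boundary vanishing
  have hradial : ∀ w : ℂ, ‖w‖ = 1 →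
      ((1 - (starRingEnd ℂ) w) * (b 0 + b 1 * w)).re = 0 := by
    intro w hw
    set γ : ℝ → ℂ := fun t => ((1 - t : ℝ) : ℂ) * w with hγdef
    have hmem : ∀ᶠ t in 𝓝[>] (0:ℝ), γ t ∈ ball (0:ℂ) 1 := by
      filter_upwards [hIoo] with t ht
      rw [hγdef, mem_ball_zero_iff]
      rw [norm_mul, hw, mul_one, Complex.norm_real, Real.norm_eq_abs]
      rw [_root_.abs_of_nonneg (by linarith [ht.2])]
      linarith [ht.1]
    have hns : Tendsto (fun t => Complex.normSq (γ t)) (𝓝[>] (0:ℝ)) (𝓝 1) := by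
      have hcont : Continuous fun t : ℝ => Complex.normSq (γ t) := by
        apply Complex.continuous_normSq.comp
        fun_prop
      have h := (hcont.tendsto 0).mono_left (nhdsWithin_le_nhds (s := Ioi (0:ℝ)))
      have hv : Complex.normSq (γ 0) = 1 := by
        rw [hγdef]
        simp [Complex.normSq_eq_norm_sq, hw]
      rw [hv] at h
      exact h
    have hSc : Tendsto (fun t : ℝ => ((1 - (starRingEnd ℂ) (γ t)) * (b 0 + b 1 * γ t)).re)
        (𝓝[>] (0:ℝ)) (𝓝 (((1 - (starRingEnd ℂ) w) * (b 0 + b 1 * w)).re)) := by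
      have hcont : Continuous fun t : ℝ =>
          ((1 - (starRingEnd ℂ) (γ t)) * (b 0 + b 1 * γ t)).re := by
        apply Complex.continuous_re.comp
        apply Continuous.mul
        · exact continuous_const.sub (Complex.continuous_conj.comp (by fun_prop))
        · fun_prop
      have h := (hcont.tendsto 0).mono_left (nhdsWithin_le_nhds (s := Ioi (0:ℝ)))
      have hv : γ 0 = w := by rw [hγdef]; simp
      rw [hv] at h
      exact h
    have hSeq : (fun t : ℝ => ((1 - (starRingEnd ℂ) (γ t)) * (b 0 + b 1 * γ t)).re)
        =ᶠ[𝓝[>] (0:ℝ)] fun t => ((1 - (starRingEnd ℂ) (γ t)) * g (γ t)).re := by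
      filter_upwards [hmem] with t hmt
      rw [hclosed2 _ hmt]
    exact pathlim γ _ hmem hns (hSc.congr' hSeq)
  -- conclude b 1 = conj (b 0)
  have hb1 : b 1 = (starRingEnd ℂ) (b 0) := by
    have h1 := hradial (-1) (by simp)
    have h2 := hradial Complex.I (by simp)
    simp only [map_neg, map_one, Complex.conj_I, Complex.mul_re, Complex.sub_re, Complex.sub_im,
      Complex.add_re, Complex.add_im, Complex.one_re, Complex.one_im, Complex.mul_im,
      Complex.neg_re, Complex.neg_im, Complex.I_re, Complex.I_im] at h1 h2
    apply Complex.ext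
    · simp only [Complex.conj_re]
      linarith
    · simp only [Complex.conj_im]
      linarith
  -- endgame
  intro z hz
  have h00 : (0:ℂ) ∈ ball (0:ℂ) 1 := by simp
  have hf0 : f 0 = b 0 := by
    have h := hclosed2 0 h00
    rw [hgdef] at h
    simpa using h
  have hgz : f z + z * (starRingEnd ℂ) (f z) = b 0 + (starRingEnd ℂ) (b 0) * z := by
    have h := hclosed2 z hz
    rw [hgdef] at h
    rw [← hb1]
    exact h
  have hgzc : (starRingEnd ℂ) (f z) + (starRingEnd ℂ) z * f z
      = (starRingEnd ℂ) (b 0) + b 0 * (starRingEnd ℂ) z := by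
    have h := congrArg (starRingEnd ℂ) hgz
    simpa [map_add, map_mul] using h
  have hkey : f z * (1 - z * (starRingEnd ℂ) z) = b 0 * (1 - z * (starRingEnd ℂ) z) := by
    have hexp : f z * (1 - z * (starRingEnd ℂ) z)
        = (f z + z * (starRingEnd ℂ) (f z))
          - z * ((starRingEnd ℂ) (f z) + (starRingEnd ℂ) z * f z) := by ring
    rw [hexp, hgz, hgzc]
    ring
  have hne : (1 - z * (starRingEnd ℂ) z) ≠ 0 := by
    have hlt := hball z hz
    rw [Complex.mul_conj]
    intro hcontra
    have h' : ((1 - Complex.normSq z : ℝ) : ℂ) = 0 := by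
      push_cast
      exact hcontra
    have := Complex.ofReal_eq_zero.mp h'
    linarith
  rw [hf0]
  exact mul_right_cancel₀ hne hkey


/-- If `F : D → B(H)` has `0 ≤ Re F(z) ≤ I` on the open unit disc and
`z ↦ F(z) + z • F(z)*` is holomorphic on the disc, then `F` is constant on the disc. -/
theorem stmt_1 {H : Type*} [NormedAddCommGroup H] [InnerProductSpace ℂ H]
    [CompleteSpace H] [TopologicalSpace.SeparableSpace H]
    (F : ℂ → H →L[ℂ] H)
    (hpos : ∀ z ∈ Metric.ball (0 : ℂ) 1,
      ((1 / 2 : ℂ) • (F z + adjoint (F z))).IsPositive)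
    (hle : ∀ z ∈ Metric.ball (0 : ℂ) 1,
      (1 - (1 / 2 : ℂ) • (F z + adjoint (F z))).IsPositive)
    (hhol : ∀ z ∈ Metric.ball (0 : ℂ) 1,
      DifferentiableAt ℂ (fun w => F w + w • adjoint (F w)) z) :
    ∃ C : H →L[ℂ] H, ∀ z ∈ Metric.ball (0 : ℂ) 1, F z = C := by
  refine ⟨F 0, fun z hz => ?_⟩
  have key : ∀ x : H, (inner ℂ x (F z x) : ℂ) = inner ℂ x (F 0 x) := by
    intro x
    have hrecompute : ∀ w : ℂ, ((1 / 2 : ℂ) • (F w + adjoint (F w))).reApplyInnerSelf x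
        = (inner ℂ x (F w x) : ℂ).re := by
      intro w
      rw [ContinuousLinearMap.reApplyInnerSelf]
      rw [ContinuousLinearMap.smul_apply, inner_smul_left, ContinuousLinearMap.add_apply,
        inner_add_left, ContinuousLinearMap.adjoint_inner_left]
      set c : ℂ := (inner ℂ x (F w x) : ℂ) with hc
      have hcc : (inner ℂ ((F w) x) x : ℂ) = (starRingEnd ℂ) c := by rw [hc, inner_conj_symm]
      rw [hcc]
      have hval : (starRingEnd ℂ) (1/2 : ℂ) * ((starRingEnd ℂ) c + c) = ((c.re : ℝ) : ℂ) := by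
        have h2 : (starRingEnd ℂ) (1/2 : ℂ) = 1/2 := by
          norm_num [Complex.ext_iff]
        rw [h2, add_comm, Complex.add_conj]
        push_cast
        ring
      rw [hval]
      simp
    have hre0 : ∀ w ∈ Metric.ball (0:ℂ) 1, 0 ≤ ((inner ℂ x (F w x) : ℂ)).re := by
      intro w hw
      have h := (hpos w hw).2 x
      rwa [hrecompute w] at h
    have hreM : ∀ w ∈ Metric.ball (0:ℂ) 1, ((inner ℂ x (F w x) : ℂ)).re ≤ ‖x‖^2 := by
      intro w hw
      have h := (hle w hw).2 x
      rw [ContinuousLinearMap.reApplyInnerSelf, ContinuousLinearMap.sub_apply,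
        inner_sub_left, ContinuousLinearMap.one_apply, map_sub] at h
      have h1 : RCLike.re (inner ℂ x x : ℂ) = ‖x‖^2 := inner_self_eq_norm_sq x
      have h2 : RCLike.re (inner ℂ ((((1:ℂ)/2) • (F w + adjoint (F w))) x) x : ℂ)
          = (inner ℂ x (F w x) : ℂ).re := by
        have := hrecompute w
        rw [ContinuousLinearMap.reApplyInnerSelf] at this
        exact this
      rw [h1, h2] at h
      linarith
    have hfun : (fun w : ℂ => (inner ℂ x (F w x) : ℂ)
          + w * (starRingEnd ℂ) (inner ℂ x (F w x) : ℂ))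
        = fun w : ℂ => (inner ℂ x ((F w + w • adjoint (F w)) x) : ℂ) := by
      funext w
      rw [ContinuousLinearMap.add_apply, inner_add_right, ContinuousLinearMap.smul_apply,
        inner_smul_right, ContinuousLinearMap.adjoint_inner_right, ← inner_conj_symm x ((F w) x)]
      simp
    have hholS : DifferentiableOn ℂ
        (fun w : ℂ => (inner ℂ x (F w x) : ℂ) + w * (starRingEnd ℂ) (inner ℂ x (F w x) : ℂ))
        (Metric.ball (0:ℂ) 1) := by
      rw [hfun]
      intro w hw
      have hG : DifferentiableAt ℂ (fun w : ℂ => F w + w • adjoint (F w)) w := hhol w hw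
      have hGx : DifferentiableAt ℂ (fun w : ℂ => (F w + w • adjoint (F w)) x) w :=
        hG.clm_apply (differentiableAt_const x)
      exact ((innerSL ℂ x).differentiableAt.comp w hGx).differentiableWithinAt
    have := stmt1_scalar hre0 hreM hholS z hz
    simpa using this
  have hdiff : ∀ x : H, (inner ℂ (((F z - F 0 : H →L[ℂ] H) : H →ₗ[ℂ] H) x) x : ℂ) = 0 := by
    intro x
    have : (inner ℂ ((F z - F 0) x) x : ℂ) = 0 := by
      rw [ContinuousLinearMap.sub_apply, inner_sub_left]
      have e1 : (inner ℂ ((F z) x) x : ℂ) = (starRingEnd ℂ) (inner ℂ x ((F z) x) : ℂ) :=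
        (inner_conj_symm _ _).symm
      have e2 : (inner ℂ ((F 0) x) x : ℂ) = (starRingEnd ℂ) (inner ℂ x ((F 0) x) : ℂ) :=
        (inner_conj_symm _ _).symm
      rw [e1, e2, key x, sub_self]
    exact this
  have hzero : ((F z - F 0 : H →L[ℂ] H) : H →ₗ[ℂ] H) = 0 :=
    (inner_map_self_eq_zero _).mp hdiff
  have : F z - F 0 = 0 := ContinuousLinearMap.coe_injective (by rw [hzero]; rfl)
  exact sub_eq_zero.mp this

end Stmt1Aux
end

section
/- Let F : D → ℂ satisfy 0 ≤ Re F(z) ≤ 1 for all z ∈ D, and suppose g(z) := F(z) + z·conj(F(z)) is holomorphic on D. Then the function h₁(z) := g(z)/(1 − z) is holomorphic on D and satisfies Re h₁(z) = (Re F(z))·(1 − |z|²)/|1 − z|² for all z ∈ D; in particular Re h₁(z) ≥ 0 on D. -/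
/-- If `0 ≤ Re F ≤ 1` on the open unit disc and `g(z) = F(z) + z * conj (F z)` is
holomorphic on the disc, then `h₁(z) = g(z)/(1-z)` is holomorphic on the disc and
`Re h₁(z) = Re F(z) · (1 - |z|²)/|1 - z|² ≥ 0` there. -/
theorem stmt_3 (F : ℂ → ℂ)
    (hre : ∀ z ∈ Metric.ball (0 : ℂ) 1, 0 ≤ (F z).re ∧ (F z).re ≤ 1)
    (hhol : ∀ z ∈ Metric.ball (0 : ℂ) 1,
      DifferentiableAt ℂ (fun w => F w + w * (starRingEnd ℂ) (F w)) z) :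
    (∀ z ∈ Metric.ball (0 : ℂ) 1,
      DifferentiableAt ℂ (fun w => (F w + w * (starRingEnd ℂ) (F w)) / (1 - w)) z) ∧
    (∀ z ∈ Metric.ball (0 : ℂ) 1,
      ((F z + z * (starRingEnd ℂ) (F z)) / (1 - z)).re
        = (F z).re * (1 - ‖z‖ ^ 2) / ‖1 - z‖ ^ 2 ∧
      0 ≤ ((F z + z * (starRingEnd ℂ) (F z)) / (1 - z)).re) := by
  have key : ∀ z ∈ Metric.ball (0 : ℂ) 1, (1 : ℂ) - z ≠ 0 := by
    intro z hz h
    have : z = 1 := by linear_combination -h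
    rw [this] at hz
    simp at hz
  have main : ∀ z ∈ Metric.ball (0 : ℂ) 1,
      ((F z + z * (starRingEnd ℂ) (F z)) / (1 - z)).re
        = (F z).re * (1 - ‖z‖ ^ 2) / ‖1 - z‖ ^ 2 := by
    intro z hz
    have h1 : Complex.normSq (1 - z) ≠ 0 := by
      simpa [Complex.normSq_eq_zero] using key z hz
    rw [Complex.div_re, Complex.sq_norm, Complex.sq_norm]
    rw [← add_div]
    congr 1
    simp [Complex.normSq_apply, Complex.sub_re, Complex.sub_im, Complex.mul_re,
      Complex.mul_im, Complex.add_re, Complex.add_im]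
    ring
  refine ⟨fun z hz => ((hhol z hz).div ((differentiableAt_const 1).sub differentiableAt_id)
    (key z hz)), fun z hz => ⟨main z hz, ?_⟩⟩
  rw [main z hz]
  have h0 := (hre z hz).1
  have habs : ‖z‖ < 1 := by simpa using hz
  have : (0:ℝ) ≤ 1 - ‖z‖ ^ 2 := by nlinarith [norm_nonneg z]
  positivity
end

section
/- Let h₁, h₂ : D → ℂ be holomorphic functions with Re h₁(z) ≥ 0 and Re h₂(z) ≥ 0 for all z ∈ D, and suppose h₁(z) + h₂(z) = (1 + z)/(1 − z) for all z ∈ D. Then for j = 1, 2 and all z ∈ D, h_j(z) = i·Im h_j(0) + (Re h_j(0))·(1 + z)/(1 − z). -/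
open Metric Set Complex

private lemma normSq_key {r : ℝ} (hr0 : 0 ≤ r) (hr1 : r ≤ 1) {u : ℂ}
    (h : Complex.normSq u ≤ r^2) :
    Complex.normSq (u - ((r^2 : ℝ) : ℂ)) ≤ r^2 * Complex.normSq (1 - u) := by
  simp only [Complex.normSq_apply, Complex.sub_re, Complex.sub_im, Complex.one_re,
    Complex.one_im, Complex.ofReal_re, Complex.ofReal_im] at *
  nlinarith [mul_nonneg (by linarith : (0:ℝ) ≤ r^2 - (u.re*u.re+u.im*u.im))
    (by nlinarith : (0:ℝ) ≤ 1 - r^2)]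

private lemma normSq_keyeq {r : ℝ} {u : ℂ} (h : Complex.normSq u = r^2) :
    Complex.normSq (u - ((r^2 : ℝ) : ℂ)) = r^2 * Complex.normSq (1 - u) := by
  simp only [Complex.normSq_apply, Complex.sub_re, Complex.sub_im, Complex.one_re,
    Complex.one_im, Complex.ofReal_re, Complex.ofReal_im] at *
  nlinarith [h]

private lemma abs_key {r : ℝ} (hr0 : 0 ≤ r) (hr1 : r ≤ 1) {u : ℂ}
    (hu : ‖u‖ ≤ r) :
    ‖u - ((r^2 : ℝ) : ℂ)‖ ≤ r * ‖1 - u‖ := by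
  have h : Complex.normSq u ≤ r^2 := by
    rw [← Complex.sq_norm]; nlinarith [norm_nonneg u]
  have h2 := normSq_key hr0 hr1 h
  calc ‖u - ((r^2 : ℝ) : ℂ)‖ = Real.sqrt (Complex.normSq (u - ((r^2:ℝ):ℂ))) :=
        Complex.norm_def _
    _ ≤ Real.sqrt (r^2 * Complex.normSq (1 - u)) := Real.sqrt_le_sqrt h2
    _ = r * ‖1 - u‖ := by
        rw [Real.sqrt_mul (sq_nonneg r), Real.sqrt_sq hr0, Complex.norm_def]

private lemma abs_keyeq {r : ℝ} (hr0 : 0 ≤ r) {u : ℂ} (hu : ‖u‖ = r) :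
    ‖u - ((r^2 : ℝ) : ℂ)‖ = r * ‖1 - u‖ := by
  have h : Complex.normSq u = r^2 := by rw [← Complex.sq_norm, hu]
  have h2 := normSq_keyeq h
  calc ‖u - ((r^2 : ℝ) : ℂ)‖ = Real.sqrt (Complex.normSq (u - ((r^2:ℝ):ℂ))) :=
        Complex.norm_def _
    _ = Real.sqrt (r^2 * Complex.normSq (1 - u)) := by rw [h2]
    _ = r * ‖1 - u‖ := by
        rw [Real.sqrt_mul (sq_nonneg r), Real.sqrt_sq hr0, Complex.norm_def]

private lemma one_sub_ne {u : ℂ} (h : ‖u‖ < 1) : (1:ℂ) - u ≠ 0 := by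
  intro hh
  have : u = 1 := by linear_combination -hh
  rw [this] at h; simp at h

private lemma mobius_id {u t : ℂ} (hu1 : (1:ℂ) - u ≠ 0) (ht1 : (1:ℂ) - t ≠ 0) :
    (1 + u) / (1 - u) - (1 + t) / (1 - t) = 2 * (u - t) / ((1 - u) * (1 - t)) := by
  field_simp
  ring

private lemma mobius_mem {r : ℝ} (hr0 : 0 ≤ r) (hr1 : r < 1) {u : ℂ}
    (hu : ‖u‖ ≤ r) :
    dist ((1+u)/(1-u)) ((1 + ((r^2:ℝ):ℂ)) / (1 - ((r^2:ℝ):ℂ))) ≤ 2*r/(1-r^2) := by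
  have hr2 : 0 < 1 - r^2 := by nlinarith
  have hu1 : (1:ℂ) - u ≠ 0 := one_sub_ne (lt_of_le_of_lt hu hr1)
  have ht1 : (1:ℂ) - ((r^2:ℝ):ℂ) ≠ 0 := by
    have : ‖((r^2:ℝ):ℂ)‖ < 1 := by
      rw [Complex.norm_real, Real.norm_eq_abs, _root_.abs_of_nonneg (sq_nonneg r)]; nlinarith
    exact one_sub_ne this
  rw [Complex.dist_eq, mobius_id hu1 ht1, norm_div, norm_mul, norm_mul, Complex.norm_two]
  have habs : ‖(1:ℂ) - ((r^2:ℝ):ℂ)‖ = 1 - r^2 := by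
    rw [show (1:ℂ) - ((r^2:ℝ):ℂ) = (((1 - r^2 : ℝ)):ℂ) by push_cast; ring,
      Complex.norm_real, Real.norm_eq_abs, abs_of_pos hr2]
  rw [habs]
  have hB : 0 < ‖1 - u‖ := by
    rw [norm_pos_iff]; exact hu1
  rw [div_le_div_iff₀ (by positivity) hr2]
  have hk := abs_key hr0 hr1.le hu
  nlinarith [hk, hr2, hB]

private lemma mobius_memeq {r : ℝ} (hr0 : 0 ≤ r) (hr1 : r < 1) {u : ℂ}
    (hu : ‖u‖ = r) :
    dist ((1+u)/(1-u)) ((1 + ((r^2:ℝ):ℂ)) / (1 - ((r^2:ℝ):ℂ))) = 2*r/(1-r^2) := by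
  have hr2 : 0 < 1 - r^2 := by nlinarith
  have hu1 : (1:ℂ) - u ≠ 0 := one_sub_ne (by rw [hu]; exact hr1)
  have ht1 : (1:ℂ) - ((r^2:ℝ):ℂ) ≠ 0 := by
    have : ‖((r^2:ℝ):ℂ)‖ < 1 := by
      rw [Complex.norm_real, Real.norm_eq_abs, _root_.abs_of_nonneg (sq_nonneg r)]; nlinarith
    exact one_sub_ne this
  rw [Complex.dist_eq, mobius_id hu1 ht1, norm_div, norm_mul, norm_mul, Complex.norm_two]
  have habs : ‖(1:ℂ) - ((r^2:ℝ):ℂ)‖ = 1 - r^2 := by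
    rw [show (1:ℂ) - ((r^2:ℝ):ℂ) = (((1 - r^2 : ℝ)):ℂ) by push_cast; ring,
      Complex.norm_real, Real.norm_eq_abs, abs_of_pos hr2]
  rw [habs]
  have hB : 0 < ‖1 - u‖ := by
    rw [norm_pos_iff]; exact hu1
  rw [abs_keyeq hr0 hu]
  field_simp

private lemma const_of_re_zero {h : ℂ → ℂ}
    (hd : ∀ z ∈ ball (0:ℂ) 1, DifferentiableAt ℂ h z)
    (hre : ∀ z ∈ ball (0:ℂ) 1, 0 ≤ (h z).re)
    {z₀ : ℂ} (hz₀ : z₀ ∈ ball (0:ℂ) 1) (h0 : (h z₀).re = 0) :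
    ∀ z ∈ ball (0:ℂ) 1, h z = h z₀ := by
  have hdo : DifferentiableOn ℂ h (ball 0 1) := fun z hz => (hd z hz).differentiableWithinAt
  have hdf : DifferentiableOn ℂ (fun z => Complex.exp (-h z)) (ball 0 1) := hdo.neg.cexp
  have hmax : IsMaxOn (norm ∘ fun z => Complex.exp (-h z)) (ball (0:ℂ) 1) z₀ := by
    intro z hz
    simp only [Function.comp_apply, Complex.norm_exp, Complex.neg_re]
    exact Real.exp_le_exp.2 (by rw [h0]; linarith [hre z hz])
  have heq := Complex.eqOn_of_isPreconnected_of_isMaxOn_norm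
    (convex_ball (0:ℂ) 1).isPreconnected isOpen_ball hdf hz₀ hmax
  have hder : ∀ z ∈ ball (0:ℂ) 1, deriv h z = 0 := by
    intro z hz
    have hev : (fun z => Complex.exp (-h z)) =ᶠ[nhds z]
        (fun _ => Complex.exp (-h z₀)) := by
      filter_upwards [isOpen_ball.mem_nhds hz] with w hw using heq hw
    have hd0 : deriv (fun z => Complex.exp (-h z)) z = 0 := by
      rw [hev.deriv_eq]; simp
    have H : HasDerivAt (fun z => Complex.exp (-h z))
        (Complex.exp (-h z) * (-deriv h z)) z := ((hd z hz).hasDerivAt.neg).cexp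
    have := H.deriv
    rw [hd0] at this
    have hexp := Complex.exp_ne_zero (-h z)
    rcases mul_eq_zero.1 this.symm with h' | h'
    · exact absurd h' hexp
    · linear_combination -h'
  intro z hz
  refine (convex_ball (0:ℂ) 1).is_const_of_fderivWithin_eq_zero hdo ?_ hz hz₀
  intro x hx
  rw [fderivWithin_of_isOpen isOpen_ball hx]
  have H := (hd x hx).hasDerivAt
  rw [hder x hx] at H
  have hz' : (ContinuousLinearMap.toSpanSingleton ℂ (0:ℂ)) = 0 := by
    ext; simp
  exact (hz' ▸ H.hasFDerivAt).fderiv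

private lemma schwarz_step {h : ℂ → ℂ}
    (hd : ∀ z ∈ ball (0:ℂ) 1, DifferentiableAt ℂ h z)
    (hpos : ∀ z ∈ ball (0:ℂ) 1, 0 < (h z).re)
    {z : ℂ} (hz : z ∈ ball (0:ℂ) 1) :
    ∃ u : ℂ, ‖u‖ ≤ ‖z‖ ∧ (1:ℂ) - u ≠ 0 ∧
      h z = Complex.I * ((h 0).im : ℂ) + ((h 0).re : ℂ) * ((1 + u) / (1 - u)) := by
  have h0mem : (0:ℂ) ∈ ball (0:ℂ) 1 := by simp
  have ha : 0 < (h 0).re := hpos 0 h0mem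
  set a : ℂ := ((h 0).re : ℂ) with ha'
  set b : ℂ := ((h 0).im : ℂ) with hb'
  have hden : ∀ w ∈ ball (0:ℂ) 1, h w + (a - Complex.I * b) ≠ 0 := by
    intro w hw hcon
    have : (h w + (a - Complex.I * b)).re = 0 := by rw [hcon]; simp
    simp only [Complex.add_re, Complex.sub_re, ha', hb', Complex.ofReal_re, Complex.mul_re,
      Complex.I_re, Complex.I_im, Complex.ofReal_im, zero_mul, one_mul, mul_zero] at this
    have := hpos w hw
    linarith
  set F : ℂ → ℂ := fun w => (h w - (Complex.I * b + a)) / (h w + (a - Complex.I * b)) with hF'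
  have hdF : DifferentiableOn ℂ F (ball (0:ℂ) 1) := by
    apply DifferentiableOn.div
    · exact (fun w hw => ((hd w hw).sub_const _).differentiableWithinAt)
    · exact (fun w hw => ((hd w hw).add_const _).differentiableWithinAt)
    · exact hden
  have hF0 : F 0 = 0 := by
    have hnum : h 0 - (Complex.I * b + a) = 0 := by
      rw [ha', hb']
      linear_combination - Complex.re_add_im (h 0)
    simp only [hF', hnum, zero_div]
  have hmaps : MapsTo F (ball (0:ℂ) 1) (ball (0:ℂ) 1) := by
    intro w hw
    rw [mem_ball_zero_iff, hF', norm_div]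
    have hd0 : 0 < ‖h w + (a - Complex.I * b)‖ := by
      rw [norm_pos_iff]; exact hden w hw
    rw [div_lt_one hd0]
    have hlt : Complex.normSq (h w - (Complex.I * b + a)) <
        Complex.normSq (h w + (a - Complex.I * b)) := by
      simp only [Complex.normSq_apply, Complex.sub_re, Complex.sub_im, Complex.add_re,
        Complex.add_im, ha', hb', Complex.ofReal_re, Complex.ofReal_im, Complex.mul_re,
        Complex.mul_im, Complex.I_re, Complex.I_im, zero_mul, one_mul, mul_zero]
      have h1 := hpos w hw
      nlinarith [h1, ha]
    calc ‖h w - (Complex.I * b + a)‖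
        = Real.sqrt (Complex.normSq (h w - (Complex.I * b + a))) := Complex.norm_def _
      _ < Real.sqrt (Complex.normSq (h w + (a - Complex.I * b))) :=
          Real.sqrt_lt_sqrt (Complex.normSq_nonneg _) hlt
      _ = ‖h w + (a - Complex.I * b)‖ := (Complex.norm_def ..).symm
  have hschwarz := dist_le_dist_of_mapsTo_ball hdF
    (by rw [hF0]; exact hmaps.mono_right ball_subset_closedBall) hz
  rw [Complex.dist_eq, Complex.dist_eq, hF0, sub_zero, sub_zero] at hschwarz
  have hz1 : ‖z‖ < 1 := by rwa [mem_ball_zero_iff] at hz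
  have h1F : (1:ℂ) - F z ≠ 0 := one_sub_ne (lt_of_le_of_lt hschwarz hz1)
  refine ⟨F z, hschwarz, h1F, ?_⟩
  have hdenz := hden z hz
  have key : F z * (h z + (a - Complex.I * b)) = h z - (Complex.I * b + a) := by
    rw [hF']; exact div_mul_cancel₀ _ hdenz
  field_simp
  linear_combination (-1 : ℂ) * key

private lemma aux (h₁ h₂ : ℂ → ℂ)
    (hd₁ : ∀ z ∈ Metric.ball (0 : ℂ) 1, DifferentiableAt ℂ h₁ z)
    (hd₂ : ∀ z ∈ Metric.ball (0 : ℂ) 1, DifferentiableAt ℂ h₂ z)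
    (hre₁ : ∀ z ∈ Metric.ball (0 : ℂ) 1, 0 ≤ (h₁ z).re)
    (hre₂ : ∀ z ∈ Metric.ball (0 : ℂ) 1, 0 ≤ (h₂ z).re)
    (hsum : ∀ z ∈ Metric.ball (0 : ℂ) 1, h₁ z + h₂ z = (1 + z) / (1 - z)) :
    ∀ z ∈ Metric.ball (0 : ℂ) 1,
      h₁ z = Complex.I * ((h₁ 0).im : ℂ) + ((h₁ 0).re : ℂ) * ((1 + z) / (1 - z)) := by
  have h0mem : (0:ℂ) ∈ ball (0:ℂ) 1 := by simp
  have hsum0 : h₁ 0 + h₂ 0 = 1 := by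
    have := hsum 0 h0mem; simpa using this
  by_cases hA : ∃ z₀ ∈ ball (0:ℂ) 1, (h₁ z₀).re = 0
  · obtain ⟨z₀, hz₀, hre0⟩ := hA
    have hc := const_of_re_zero hd₁ hre₁ hz₀ hre0
    have h10 : h₁ 0 = h₁ z₀ := hc 0 h0mem
    have hre00 : (h₁ 0).re = 0 := by rw [h10]; exact hre0
    intro z hz
    have h1z : h₁ z = h₁ 0 := (hc z hz).trans h10.symm
    rw [h1z, hre00]
    push_cast
    rw [zero_mul, add_zero]
    exact (Complex.ext (by simp [hre00]) (by simp)).symm |>.symm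
  by_cases hB : ∃ z₀ ∈ ball (0:ℂ) 1, (h₂ z₀).re = 0
  · obtain ⟨z₀, hz₀, hre0⟩ := hB
    have hc := const_of_re_zero hd₂ hre₂ hz₀ hre0
    have h20 : h₂ 0 = h₂ z₀ := hc 0 h0mem
    have hre00 : (h₂ 0).re = 0 := by rw [h20]; exact hre0
    intro z hz
    have h2z : h₂ z = h₂ 0 := (hc z hz).trans h20.symm
    have h1z : h₁ z = (1+z)/(1-z) - h₂ 0 := by
      have := hsum z hz; rw [h2z] at this; linear_combination this
    have h10 : h₁ 0 = 1 - h₂ 0 := by linear_combination hsum0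
    have h20I : h₂ 0 = Complex.I * ((h₂ 0).im : ℂ) := by
      exact Complex.ext (by simp [hre00]) (by simp)
    rw [h1z, h10]
    simp only [Complex.sub_re, Complex.sub_im, Complex.one_re, Complex.one_im, hre00]
    push_cast
    linear_combination -h20I
  · push_neg at hA hB
    have hpos₁ : ∀ z ∈ ball (0:ℂ) 1, 0 < (h₁ z).re :=
      fun z hz => (hre₁ z hz).lt_of_ne (fun e => hA z hz e.symm)
    have hpos₂ : ∀ z ∈ ball (0:ℂ) 1, 0 < (h₂ z).re :=
      fun z hz => (hre₂ z hz).lt_of_ne (fun e => hB z hz e.symm)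
    have hα : 0 < (h₁ 0).re := hpos₁ 0 h0mem
    have hα₂ : 0 < (h₂ 0).re := hpos₂ 0 h0mem
    have hαsum : (h₁ 0).re + (h₂ 0).re = 1 := by
      have := congrArg Complex.re hsum0; simpa using this
    have hβsum : ((h₁ 0).im : ℂ) + ((h₂ 0).im : ℂ) = 0 := by
      have := congrArg Complex.im hsum0
      simp only [Complex.add_im, Complex.one_im] at this
      exact_mod_cast congrArg (fun t : ℝ => (t:ℂ)) this
    intro z hz
    by_cases hz0 : z = 0
    · subst hz0
      norm_num
      linear_combination - Complex.re_add_im (h₁ 0)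
    obtain ⟨u, hu, hu1, hequ⟩ := schwarz_step hd₁ hpos₁ hz
    obtain ⟨v, hv, hv1, heqv⟩ := schwarz_step hd₂ hpos₂ hz
    set r : ℝ := ‖z‖ with hr'
    have hr0 : 0 < r := norm_pos_iff.2 hz0
    have hr1 : r < 1 := by rwa [mem_ball_zero_iff] at hz
    set P : ℂ := (1+u)/(1-u) with hP'
    set Q : ℂ := (1+v)/(1-v) with hQ'
    set X : ℂ := (1+z)/(1-z) with hX'
    set c : ℂ := (1 + ((r^2:ℝ):ℂ)) / (1 - ((r^2:ℝ):ℂ)) with hc'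
    have hP : P ∈ closedBall c (2*r/(1-r^2)) := by
      rw [mem_closedBall]; exact mobius_mem hr0.le hr1 hu
    have hQ : Q ∈ closedBall c (2*r/(1-r^2)) := by
      rw [mem_closedBall]; exact mobius_mem hr0.le hr1 hv
    have hX : dist X c = 2*r/(1-r^2) := mobius_memeq hr0.le hr1 rfl
    have hcomb : ((h₁ 0).re : ℂ) * P + ((h₂ 0).re : ℂ) * Q = X := by
      have hs := hsum z hz
      linear_combination hs - hequ - heqv - Complex.I * hβsum
    have hPQ : P = Q := by
      by_contra hne
      have hmem := combo_mem_ball_of_ne hP hQ hne hα hα₂ hαsum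
      rw [mem_ball] at hmem
      have : (h₁ 0).re • P + (h₂ 0).re • Q = X := by
        rw [Complex.real_smul, Complex.real_smul]; exact hcomb
      rw [this, hX] at hmem
      exact lt_irrefl _ hmem
    have hone : ((h₁ 0).re : ℂ) + ((h₂ 0).re : ℂ) = 1 := by
      exact_mod_cast congrArg (fun t : ℝ => (t:ℂ)) hαsum
    have hPX : P = X := by
      rw [hPQ] at hcomb
      linear_combination hcomb - Q * hone + hPQ
    rw [hequ, hPX]

/-- If `h₁, h₂` are holomorphic on the open unit disc with nonnegative real parts and
`h₁(z) + h₂(z) = (1+z)/(1-z)`, then each `h_j` has the form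
`i·Im h_j(0) + Re h_j(0) · (1+z)/(1-z)`. -/
theorem stmt_4 (h₁ h₂ : ℂ → ℂ)
    (hd₁ : ∀ z ∈ Metric.ball (0 : ℂ) 1, DifferentiableAt ℂ h₁ z)
    (hd₂ : ∀ z ∈ Metric.ball (0 : ℂ) 1, DifferentiableAt ℂ h₂ z)
    (hre₁ : ∀ z ∈ Metric.ball (0 : ℂ) 1, 0 ≤ (h₁ z).re)
    (hre₂ : ∀ z ∈ Metric.ball (0 : ℂ) 1, 0 ≤ (h₂ z).re)
    (hsum : ∀ z ∈ Metric.ball (0 : ℂ) 1, h₁ z + h₂ z = (1 + z) / (1 - z)) :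
    ∀ z ∈ Metric.ball (0 : ℂ) 1,
      h₁ z = Complex.I * ((h₁ 0).im : ℂ) + ((h₁ 0).re : ℂ) * ((1 + z) / (1 - z)) ∧
      h₂ z = Complex.I * ((h₂ 0).im : ℂ) + ((h₂ 0).re : ℂ) * ((1 + z) / (1 - z)) := by
  intro z hz
  refine ⟨aux h₁ h₂ hd₁ hd₂ hre₁ hre₂ hsum z hz, aux h₂ h₁ hd₂ hd₁ hre₂ hre₁ ?_ z hz⟩
  intro w hw
  rw [add_comm]
  exact hsum w hw
end

section
/- Let P₀ denote the set of holomorphic functions f on the open unit disc D with f(0) = 1 and Re f(z) > 0 for all z ∈ D. Then the function φ(z) = (1 + z)/(1 − z) is an extreme point of the convex set P₀; that is, if f₁, f₂ ∈ P₀ and 0 < t < 1 satisfy t·f₁(z) + (1 − t)·f₂(z) = φ(z) for all z ∈ D, then f₁ = f₂ = φ. -/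
open Metric Set Complex

/-- Auxiliary: for `f` holomorphic on the unit disc with `f 0 = 1` and positive real part,
the derivative at `0` has norm at most `2`, and if it equals `2` then `f = (1+z)/(1-z)`. -/
lemma aux_P0 (f : ℂ → ℂ) (hd : DifferentiableOn ℂ f (ball (0 : ℂ) 1))
    (h0 : f 0 = 1) (hre : ∀ z ∈ ball (0 : ℂ) 1, 0 < (f z).re) :
    ‖deriv f 0‖ ≤ 2 ∧ (deriv f 0 = 2 →
      ∀ z ∈ ball (0 : ℂ) 1, f z = (1 + z) / (1 - z)) := by
  set ω : ℂ → ℂ := fun z => (f z - 1) / (f z + 1) with hω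
  have hne : ∀ z ∈ ball (0 : ℂ) 1, f z + 1 ≠ 0 := by
    intro z hz h
    have h1 := hre z hz
    have : (f z + 1).re = 0 := by rw [h]; simp
    simp [Complex.add_re] at this
    linarith
  have hdω : DifferentiableOn ℂ ω (ball (0 : ℂ) 1) :=
    (hd.sub (differentiableOn_const 1)).div (hd.add (differentiableOn_const 1)) hne
  have hω0 : ω 0 = 0 := by simp [hω, h0]
  have hmaps : MapsTo ω (ball (0 : ℂ) 1) (ball (ω 0) 1) := by
    rw [hω0]
    intro z hz
    rw [mem_ball_zero_iff]
    have hr := hre z hz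
    have hns : Complex.normSq (f z - 1) < Complex.normSq (f z + 1) := by
      simp only [Complex.normSq_apply, Complex.sub_re, Complex.add_re, Complex.sub_im,
        Complex.add_im, Complex.one_re, Complex.one_im]
      nlinarith
    have h2 : ‖f z - 1‖ < ‖f z + 1‖ := by
      rw [Complex.norm_def, Complex.norm_def]
      exact Real.sqrt_lt_sqrt (Complex.normSq_nonneg _) hns
    have h3 : 0 < ‖f z + 1‖ := norm_pos_iff.mpr (hne z hz)
    rw [hω]
    simp only [norm_div]
    rw [div_lt_one h3]
    exact h2
  have hf0 : DifferentiableAt ℂ f 0 :=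
    hd.differentiableAt (isOpen_ball.mem_nhds (mem_ball_self one_pos))
  have hfd : HasDerivAt f (deriv f 0) 0 := hf0.hasDerivAt
  have hωd : HasDerivAt ω (deriv f 0 / 2) 0 := by
    have := ((hfd.sub_const 1).fun_div (hfd.add_const 1) (by rw [h0]; norm_num))
    refine this.congr_deriv ?_
    rw [h0]
    ring_nf
  have hderiv_ω : deriv ω 0 = deriv f 0 / 2 := hωd.deriv
  have hbound : ‖deriv ω 0‖ ≤ 1 := by
    have := Complex.norm_deriv_le_div_of_mapsTo_ball hdω (hmaps.mono_right ball_subset_closedBall) one_pos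
    simpa using this
  constructor
  · rw [hderiv_ω] at hbound
    rw [norm_div] at hbound
    simp at hbound
    linarith
  · intro hd2
    have hds : dslope ω 0 0 = 1 := by
      rw [dslope_same, hderiv_ω, hd2]; norm_num
    have heq : ‖dslope ω 0 0‖ = 1 / 1 := by rw [hds]; norm_num
    have haff := Complex.affine_of_mapsTo_ball_of_exists_norm_dslope_eq_div hdω (hmaps.mono_right ball_subset_closedBall)
      (mem_ball_self one_pos) heq
    intro z hz
    have hωz : ω z = z := by
      have := haff hz
      rw [hds, hω0] at this
      simpa using this
    have h1z : (1 : ℂ) - z ≠ 0 := by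
      intro h
      rw [sub_eq_zero] at h
      rw [mem_ball_zero_iff] at hz
      rw [← h] at hz
      norm_num at hz
    have hnez := hne z hz
    rw [hω] at hωz
    rw [div_eq_iff hnez] at hωz
    rw [eq_div_iff h1z]
    linear_combination hωz

/-- Auxiliary algebra: a proper convex combination of two complex numbers of norm at most `2`
equal to `2` forces both to be `2`. -/
lemma aux_conv (a b : ℂ) (t : ℝ) (ht₀ : 0 < t) (ht₁ : t < 1)
    (ha : ‖a‖ ≤ 2) (hb : ‖b‖ ≤ 2)
    (h : (t : ℂ) * a + ((1 - t : ℝ) : ℂ) * b = 2) : a = 2 ∧ b = 2 := by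
  have hre : t * a.re + (1 - t) * b.re = 2 := by
    have := congrArg Complex.re h
    simpa using this
  have hare : a.re ≤ 2 := (Complex.re_le_norm a).trans ha
  have hbre : b.re ≤ 2 := (Complex.re_le_norm b).trans hb
  have hare2 : a.re = 2 := by nlinarith
  have hbre2 : b.re = 2 := by nlinarith
  have hasq : a.re * a.re + a.im * a.im ≤ 4 := by
    have h1 : ‖a‖ ≤ 2 := ha
    have h2 : Complex.normSq a ≤ 4 := by
      rw [← Complex.sq_norm]; nlinarith [norm_nonneg a]
    rwa [Complex.normSq_apply] at h2
  have hbsq : b.re * b.re + b.im * b.im ≤ 4 := by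
    have h1 : ‖b‖ ≤ 2 := hb
    have h2 : Complex.normSq b ≤ 4 := by
      rw [← Complex.sq_norm]; nlinarith [norm_nonneg b]
    rwa [Complex.normSq_apply] at h2
  have haim : a.im = 0 := by nlinarith
  have hbim : b.im = 0 := by nlinarith
  constructor <;> [skip; skip] <;>
    · apply Complex.ext <;> simp [hare2, hbre2, haim, hbim]

/-- The function `φ(z) = (1+z)/(1-z)` is an extreme point of the convex set `P₀` of
holomorphic functions on the open unit disc with `f(0) = 1` and positive real part:
any proper convex combination of members of `P₀` equal to `φ` forces both members to be `φ`. -/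
theorem stmt_5 (f₁ f₂ : ℂ → ℂ) (t : ℝ) (ht₀ : 0 < t) (ht₁ : t < 1)
    (hd₁ : ∀ z ∈ Metric.ball (0 : ℂ) 1, DifferentiableAt ℂ f₁ z)
    (hd₂ : ∀ z ∈ Metric.ball (0 : ℂ) 1, DifferentiableAt ℂ f₂ z)
    (h₁0 : f₁ 0 = 1) (h₂0 : f₂ 0 = 1)
    (hre₁ : ∀ z ∈ Metric.ball (0 : ℂ) 1, 0 < (f₁ z).re)
    (hre₂ : ∀ z ∈ Metric.ball (0 : ℂ) 1, 0 < (f₂ z).re)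
    (hconv : ∀ z ∈ Metric.ball (0 : ℂ) 1,
      (t : ℂ) * f₁ z + ((1 - t : ℝ) : ℂ) * f₂ z = (1 + z) / (1 - z)) :
    ∀ z ∈ Metric.ball (0 : ℂ) 1,
      f₁ z = (1 + z) / (1 - z) ∧ f₂ z = (1 + z) / (1 - z) := by
  have hd₁' : DifferentiableOn ℂ f₁ (ball (0 : ℂ) 1) :=
    fun z hz => (hd₁ z hz).differentiableWithinAt
  have hd₂' : DifferentiableOn ℂ f₂ (ball (0 : ℂ) 1) :=
    fun z hz => (hd₂ z hz).differentiableWithinAt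
  obtain ⟨hb₁, he₁⟩ := aux_P0 f₁ hd₁' h₁0 hre₁
  obtain ⟨hb₂, he₂⟩ := aux_P0 f₂ hd₂' h₂0 hre₂
  -- derivative of φ at 0 is 2
  have hφ : HasDerivAt (fun z : ℂ => (1 + z) / (1 - z)) 2 0 := by
    have h1 : HasDerivAt (fun z : ℂ => 1 + z) 1 0 := by
      simpa using (hasDerivAt_id (0 : ℂ)).const_add 1
    have h2 : HasDerivAt (fun z : ℂ => 1 - z) (-1) 0 := by
      simpa using (hasDerivAt_id (0 : ℂ)).const_sub 1
    have := h1.fun_div h2 (by norm_num)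
    refine this.congr_deriv ?_
    norm_num
  -- derivative of the convex combination
  have h₁d : HasDerivAt f₁ (deriv f₁ 0) 0 := (hd₁ 0 (mem_ball_self one_pos)).hasDerivAt
  have h₂d : HasDerivAt f₂ (deriv f₂ 0) 0 := (hd₂ 0 (mem_ball_self one_pos)).hasDerivAt
  have hg : HasDerivAt (fun z => (t : ℂ) * f₁ z + ((1 - t : ℝ) : ℂ) * f₂ z)
      ((t : ℂ) * deriv f₁ 0 + ((1 - t : ℝ) : ℂ) * deriv f₂ 0) 0 :=
    (h₁d.const_mul _).add (h₂d.const_mul _)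
  have hev : (fun z => (t : ℂ) * f₁ z + ((1 - t : ℝ) : ℂ) * f₂ z)
      =ᶠ[nhds (0 : ℂ)] (fun z : ℂ => (1 + z) / (1 - z)) :=
    Filter.eventuallyEq_of_mem (isOpen_ball.mem_nhds (mem_ball_self one_pos)) hconv
  have hg' : HasDerivAt (fun z => (t : ℂ) * f₁ z + ((1 - t : ℝ) : ℂ) * f₂ z) 2 0 :=
    hφ.congr_of_eventuallyEq hev
  have hsum : (t : ℂ) * deriv f₁ 0 + ((1 - t : ℝ) : ℂ) * deriv f₂ 0 = 2 := hg.unique hg'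
  obtain ⟨ha2, hb2⟩ := aux_conv (deriv f₁ 0) (deriv f₂ 0) t ht₀ ht₁ hb₁ hb₂ hsum
  intro z hz
  exact ⟨he₁ ha2 z hz, he₂ hb2 z hz⟩
end

section
/- Let H be a complex separable Hilbert space and let h₁, h₂ : D → B(H) be holomorphic functions such that Re h_j(z) := (h_j(z) + h_j(z)*)/2 is a positive operator for every z ∈ D and j = 1, 2, and such that h₁(z) + h₂(z) = ((1 + z)/(1 − z))·I for all z ∈ D. Then there exist self-adjoint operators A₁, A₂ ∈ B(H) and positive operators B₁, B₂ ∈ B(H) with B₁ + B₂ = I such that h_j(z) = i·A_j + ((1 + z)/(1 − z))·B_j for all z ∈ D and j = 1, 2. -/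
open ContinuousLinearMap

section Aux

open Metric Set Filter Complex

noncomputable def Complex.abs : AbsoluteValue ℂ ℝ := NormedField.toAbsoluteValue ℂ

@[simp] lemma Complex.abs_apply (z : ℂ) : Complex.abs z = ‖z‖ := rfl

lemma Complex.norm_eq_abs (z : ℂ) : ‖z‖ = Complex.abs z := rfl

lemma Complex.abs_ofReal (r : ℝ) : Complex.abs (r : ℂ) = |r| := by simp

lemma Complex.sq_abs (z : ℂ) : Complex.abs z ^ 2 = Complex.normSq z := by
  simp [Complex.sq_norm]



/-- If a holomorphic function takes real values near a point, its derivative there is 0. -/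
lemma deriv_zero_of_real {ψ : ℂ → ℂ} {d z₀ : ℂ} (hd : HasDerivAt ψ d z₀)
    (hre : ∀ᶠ z in nhds z₀, (ψ z).im = 0) : d = 0 := by
  have key : ∀ v : ℂ, (v * d).im = 0 := by
    intro v
    have hγ : HasDerivAt (fun t : ℝ => z₀ + t • v) v 0 := by
      simpa using ((hasDerivAt_id (0:ℝ)).smul_const v).const_add z₀
    have hcomp : HasDerivAt (fun t : ℝ => ψ (z₀ + t • v)) (v • d) 0 := by
      have := HasDerivAt.scomp (0:ℝ) (by simpa using hd) hγ
      exact this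
    have hslope := hasDerivAt_iff_tendsto_slope.mp hcomp
    have hclosed : IsClosed {w : ℂ | w.im = 0} :=
      isClosed_eq (Complex.continuous_im) continuous_const
    have hev : ∀ᶠ t in nhdsWithin (0:ℝ) {0}ᶜ,
        slope (fun t : ℝ => ψ (z₀ + t • v)) 0 t ∈ {w : ℂ | w.im = 0} := by
      have hcont : Tendsto (fun t : ℝ => z₀ + t • v) (nhds 0) (nhds z₀) := by
        have : Continuous (fun t : ℝ => z₀ + t • v) := by continuity
        simpa using this.tendsto 0
      have h0 : ∀ᶠ t : ℝ in nhds 0, (ψ (z₀ + t • v)).im = 0 := hcont.eventually hre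
      have h0' : ∀ᶠ t : ℝ in nhdsWithin (0:ℝ) {0}ᶜ, (ψ (z₀ + t • v)).im = 0 :=
        nhdsWithin_le_nhds h0
      have hz0 : (ψ z₀).im = 0 := hre.self_of_nhds
      filter_upwards [h0'] with t ht
      simp only [mem_setOf_eq, slope_def_module, Complex.real_smul] at ht ⊢
      simp [Complex.smul_im, Complex.sub_im, ht, hz0]
    have := hclosed.mem_of_tendsto hslope hev
    simpa using this
  have h1 : d.im = 0 := by simpa using key 1
  have h2 : d.re = 0 := by
    have := key Complex.I
    simpa [Complex.mul_im, h1] using this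
  exact Complex.ext h2 h1

/-- Triangle equality: if `|a| + |c - a| ≤ c` for a real `c`, then `a` is real. -/
lemma im_zero_of_abs_add (a : ℂ) (c : ℝ) (h : Complex.abs a + Complex.abs ((c:ℂ) - a) ≤ c) :
    a.im = 0 := by
  have htri : (c:ℝ) ≤ Complex.abs a + Complex.abs ((c:ℂ) - a) := by
    calc (c:ℝ) ≤ Complex.abs (c:ℂ) := by simp [Complex.abs_ofReal, le_abs_self]
    _ = Complex.abs (a + ((c:ℂ) - a)) := by ring_nf
    _ ≤ _ := Complex.abs.add_le _ _
  have heq : Complex.abs a + Complex.abs ((c:ℂ) - a) = c := le_antisymm h htri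
  rcases eq_or_lt_of_le (show (0:ℝ) ≤ c from le_trans (by positivity) h) with hc | hc
  · -- c = 0 : both abs are 0
    have : Complex.abs a = 0 := by
      nlinarith [Complex.abs.nonneg a, Complex.abs.nonneg ((c:ℂ) - a)]
    simp [Complex.abs.eq_zero.mp this]
  · set s := Complex.abs a with hs
    set t := Complex.abs ((c:ℂ) - a) with ht
    have hst : s + t = c := heq
    have hs2 : s^2 = a.re^2 + a.im^2 := by
      rw [hs, Complex.sq_abs, Complex.normSq_apply]; ring
    have ht2 : t^2 = (c - a.re)^2 + a.im^2 := by
      rw [ht, Complex.sq_abs, Complex.normSq_apply]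
      simp [Complex.sub_re, Complex.sub_im]
      ring
    -- t = c - s, so t² = c² - 2cs + s² ⇒ c*a.re = c*s ⇒ s = a.re ⇒ a.im = 0
    have htc : t = c - s := by linarith
    have ht2' : (c - s)^2 = (c - a.re)^2 + a.im^2 := by rw [← htc]; exact ht2
    have h3 : c * s = c * a.re := by linear_combination (hs2 - ht2') / 2
    have hsx : s = a.re := mul_left_cancel₀ hc.ne' h3
    have h4 : a.im ^ 2 = 0 := by nlinarith
    exact pow_eq_zero_iff (by norm_num) |>.mp h4



lemma normSq_mobius (z₀ w : ℂ) :
    Complex.normSq (1 + (starRingEnd ℂ) z₀ * w) - Complex.normSq (w + z₀)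
      = (1 - Complex.normSq w) * (1 - Complex.normSq z₀) := by
  simp only [Complex.normSq_apply, Complex.add_re, Complex.add_im, Complex.mul_re,
    Complex.mul_im, Complex.one_re, Complex.one_im, Complex.conj_re, Complex.conj_im]
  ring

lemma normSq_halfplane (u c : ℂ) :
    Complex.normSq (u + (starRingEnd ℂ) c) - Complex.normSq (u - c) = 4 * u.re * c.re := by
  simp only [Complex.normSq_apply, Complex.add_re, Complex.add_im, Complex.sub_re,
    Complex.sub_im, Complex.conj_re, Complex.conj_im]
  ring

lemma abs_lt_abs_of_normSq {x y : ℂ} (h : Complex.normSq x < Complex.normSq y) :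
    Complex.abs x < Complex.abs y := by
  have := Real.sqrt_lt_sqrt (Complex.normSq_nonneg x) h
  simpa [Complex.abs_apply, Complex.norm_def] using this

lemma herglotz_deriv_bound {f : ℂ → ℂ} (hd : ∀ z ∈ ball (0:ℂ) 1, DifferentiableAt ℂ f z)
    (hre : ∀ z ∈ ball (0:ℂ) 1, 0 ≤ (f z).re) {z₀ : ℂ} (hz₀ : z₀ ∈ ball (0:ℂ) 1) :
    ‖deriv f z₀‖ * (1 - (Complex.abs z₀)^2) ≤ 2 * (f z₀).re := by
  have hz₀' : Complex.abs z₀ < 1 := by rwa [mem_ball_zero_iff] at hz₀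
  have hz₀sq : Complex.normSq z₀ < 1 := by
    rw [← Complex.sq_abs]; nlinarith [Complex.abs.nonneg z₀]
  refine le_of_forall_pos_le_add fun ε hε => ?_
  set δ : ℝ := ε/2 with hδ
  have hδpos : 0 < δ := by positivity
  set c : ℂ := f z₀ + δ with hc
  have hrec : 0 < c.re := by
    have := hre z₀ hz₀
    simp only [hc, Complex.add_re, Complex.ofReal_re]
    linarith
  set σ : ℂ → ℂ := fun w => (w + z₀) / (1 + (starRingEnd ℂ) z₀ * w) with hσ
  have hden : ∀ w ∈ ball (0:ℂ) 1, 1 + (starRingEnd ℂ) z₀ * w ≠ 0 := by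
    intro w hw
    rw [mem_ball_zero_iff] at hw
    intro h0
    have h1 : Complex.abs ((starRingEnd ℂ) z₀ * w) = 1 := by
      have : (starRingEnd ℂ) z₀ * w = -1 := by linear_combination h0
      simp [this]
    have : Complex.abs ((starRingEnd ℂ) z₀ * w) < 1 := by
      rw [map_mul]
      calc Complex.abs ((starRingEnd ℂ) z₀) * Complex.abs w
          ≤ 1 * Complex.abs w := by
            apply mul_le_mul_of_nonneg_right _ (Complex.abs.nonneg w)
            simpa using hz₀'.le
        _ < 1 := by simpa using hw
    linarith [h1 ▸ this]
  have hσmaps : MapsTo σ (ball (0:ℂ) 1) (ball (0:ℂ) 1) := by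
    intro w hw
    have hw' : Complex.abs w < 1 := by rwa [mem_ball_zero_iff] at hw
    have hwsq : Complex.normSq w < 1 := by
      rw [← Complex.sq_abs]; nlinarith [Complex.abs.nonneg w]
    rw [mem_ball_zero_iff]
    simp only [hσ, Complex.norm_eq_abs, map_div₀]
    rw [div_lt_one (by
      have := hden w hw
      have := Complex.abs.pos this
      linarith)]
    apply abs_lt_abs_of_normSq
    nlinarith [normSq_mobius z₀ w]
  have hσ0 : σ 0 = z₀ := by simp [hσ]
  -- denominator of G
  have hGden : ∀ w ∈ ball (0:ℂ) 1, f (σ w) + (δ:ℂ) + (starRingEnd ℂ) c ≠ 0 := by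
    intro w hw
    have h1 : 0 ≤ (f (σ w)).re := hre _ (hσmaps hw)
    intro h0
    have : (f (σ w) + (δ:ℂ) + (starRingEnd ℂ) c).re = 0 := by rw [h0]; simp
    simp only [Complex.add_re, Complex.ofReal_re, Complex.conj_re] at this
    linarith
  set G : ℂ → ℂ := fun w => (f (σ w) + (δ:ℂ) - c) / (f (σ w) + (δ:ℂ) + (starRingEnd ℂ) c)
    with hG
  have hσdiff : DifferentiableOn ℂ σ (ball (0:ℂ) 1) := by
    intro w hw
    apply DifferentiableAt.differentiableWithinAt
    exact (differentiableAt_id.add (differentiableAt_const _)).div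
      ((differentiableAt_const _).add ((differentiableAt_const _).mul differentiableAt_id))
      (hden w hw)
  have hGdiff : DifferentiableOn ℂ G (ball (0:ℂ) 1) := by
    intro w hw
    have hfd : DifferentiableAt ℂ f (σ w) := hd _ (hσmaps hw)
    have hσd : DifferentiableAt ℂ σ w := (hσdiff w hw).differentiableAt
      ((isOpen_ball).mem_nhds hw)
    apply DifferentiableAt.differentiableWithinAt
    exact (((hfd.comp w hσd).add (differentiableAt_const _)).sub (differentiableAt_const _)).div
      (((hfd.comp w hσd).add (differentiableAt_const _)).add (differentiableAt_const _))
      (hGden w hw)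
  have hG0 : G 0 = 0 := by
    simp only [hG, hσ0]
    rw [div_eq_zero_iff]
    left
    simp [hc]
  have hGmaps : MapsTo G (ball (0:ℂ) 1) (ball (G 0) 1) := by
    intro w hw
    rw [hG0, mem_ball_zero_iff]
    simp only [hG, Complex.norm_eq_abs, map_div₀]
    rw [div_lt_one (Complex.abs.pos (hGden w hw))]
    apply abs_lt_abs_of_normSq
    have h1 : 0 ≤ (f (σ w)).re := hre _ (hσmaps hw)
    have key := normSq_halfplane (f (σ w) + (δ:ℂ)) c
    have hure : (f (σ w) + (δ:ℂ)).re = (f (σ w)).re + δ := by simp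
    have : f (σ w) + (δ:ℂ) - c = f (σ w) + (δ:ℂ) - c := rfl
    nlinarith [key, hure]
  have hschwarz : ‖deriv G 0‖ ≤ 1 / 1 :=
    Complex.norm_deriv_le_div_of_mapsTo_ball hGdiff (hGmaps.mono_right ball_subset_closedBall) one_pos
  -- compute deriv G 0
  have hσder : HasDerivAt σ (1 - Complex.normSq z₀) 0 := by
    have h1 : HasDerivAt (fun w : ℂ => w + z₀) 1 0 := by
      simpa using (hasDerivAt_id (0:ℂ)).add_const z₀
    have h2 : HasDerivAt (fun w : ℂ => 1 + (starRingEnd ℂ) z₀ * w) ((starRingEnd ℂ) z₀) 0 := by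
      simpa using ((hasDerivAt_id (0:ℂ)).const_mul ((starRingEnd ℂ) z₀)).const_add 1
    have h3 := h1.div h2 (by simpa using hden 0 (mem_ball_self one_pos))
    refine h3.congr_deriv ?_; symm
    simp [Complex.normSq_eq_conj_mul_self]
    ring
  have hfder : HasDerivAt f (deriv f z₀) z₀ := (hd z₀ hz₀).hasDerivAt
  have hccne : c + (starRingEnd ℂ) c ≠ 0 := by
    intro h0
    have : (c + (starRingEnd ℂ) c).re = 0 := by rw [h0]; simp
    simp only [Complex.add_re, Complex.conj_re] at this
    linarith
  have hGder : HasDerivAt G ((deriv f z₀ * (1 - Complex.normSq z₀)) / (c + (starRingEnd ℂ) c))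
      0 := by
    have hcomp : HasDerivAt (fun w => f (σ w)) (deriv f z₀ * (1 - Complex.normSq z₀)) 0 := by
      have := HasDerivAt.comp (0:ℂ) (hσ0 ▸ hfder) hσder
      rw [hσ0] at this
      exact this
    have hnum : HasDerivAt (fun w => f (σ w) + (δ:ℂ) - c)
        (deriv f z₀ * (1 - Complex.normSq z₀)) 0 := (hcomp.add_const _).sub_const _
    have hden2 : HasDerivAt (fun w => f (σ w) + (δ:ℂ) + (starRingEnd ℂ) c)
        (deriv f z₀ * (1 - Complex.normSq z₀)) 0 := (hcomp.add_const _).add_const _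
    have h0 : f (σ 0) + (δ:ℂ) + (starRingEnd ℂ) c ≠ 0 := hGden 0 (mem_ball_self one_pos)
    have := hnum.div hden2 h0
    refine this.congr_deriv ?_; symm
    rw [hσ0]
    have h0' : f z₀ + (δ:ℂ) - c = 0 := by rw [hc]; ring
    have hdeq : f z₀ + (δ:ℂ) + (starRingEnd ℂ) c = c + (starRingEnd ℂ) c := by rw [hc]
    rw [h0', hdeq]
    field_simp
    ring
  have hd0 : deriv G 0 = (deriv f z₀ * (1 - Complex.normSq z₀)) / (c + (starRingEnd ℂ) c) :=
    hGder.deriv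
  rw [hd0] at hschwarz
  have habs : ‖c + (starRingEnd ℂ) c‖ = 2 * c.re := by
    have : c + (starRingEnd ℂ) c = ((2 * c.re : ℝ) : ℂ) := by
      apply Complex.ext <;> simp [Complex.add_re, Complex.add_im, Complex.conj_re,
        Complex.conj_im] <;> ring
    rw [this, Complex.norm_real, Real.norm_eq_abs, abs_of_pos (by linarith)]
  have hnsq : ‖(1 - Complex.normSq z₀ : ℂ)‖ = 1 - (Complex.abs z₀)^2 := by
    have h1 : ((1 - Complex.normSq z₀ : ℝ) : ℂ) = (1 - Complex.normSq z₀ : ℂ) := by push_cast; ring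
    rw [← h1, Complex.norm_real, Real.norm_eq_abs,
      abs_of_pos (by linarith), Complex.sq_abs]
  rw [norm_div, norm_mul, habs, hnsq] at hschwarz
  have hcre : c.re = (f z₀).re + δ := by simp [hc]
  rw [div_le_iff₀ (by linarith)] at hschwarz
  calc ‖deriv f z₀‖ * (1 - Complex.abs z₀ ^ 2) ≤ 1/1 * (2 * c.re) := hschwarz
    _ = 2 * (f z₀).re + ε := by rw [hcre, hδ]; ring



lemma phi_hasDeriv {z : ℂ} (hz : (1:ℂ) - z ≠ 0) :
    HasDerivAt (fun z : ℂ => (1+z)/(1-z)) (2/(1-z)^2) z := by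
  have h1 : HasDerivAt (fun z : ℂ => 1+z) 1 z := by simpa using (hasDerivAt_id z).const_add 1
  have h2 : HasDerivAt (fun z : ℂ => 1-z) (-1) z := by
    simpa using (hasDerivAt_id z).const_sub 1
  have h3 := h1.div h2 hz
  refine h3.congr_deriv ?_; symm
  congr 1
  ring

lemma one_sub_ne_s7 {z : ℂ} (hz : z ∈ ball (0:ℂ) 1) : (1:ℂ) - z ≠ 0 := by
  rw [mem_ball_zero_iff] at hz
  intro h
  have : z = 1 := by linear_combination -h
  rw [this] at hz
  simp at hz

lemma phi_re {z : ℂ} : ((1+z)/(1-z)).re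
    = (1 - Complex.normSq z) / Complex.normSq (1-z) := by
  rw [Complex.div_re]
  simp only [Complex.add_re, Complex.add_im, Complex.sub_re, Complex.sub_im, Complex.one_re,
    Complex.one_im, Complex.normSq_apply]
  ring_nf

/-- Constancy from zero derivative on the ball. -/
lemma const_of_deriv_zero {F : ℂ → ℂ}
    (h : ∀ z ∈ ball (0:ℂ) 1, HasDerivAt F 0 z) :
    ∀ z ∈ ball (0:ℂ) 1, F z = F 0 := by
  intro z hz
  have key := Convex.norm_image_sub_le_of_norm_hasFDerivWithin_le
    (f := F) (f' := fun _ => (0 : ℂ →L[ℝ] ℂ)) (s := ball (0:ℂ) 1) (C := 0)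
    (fun x hx => by
      have h0 : (ContinuousLinearMap.toSpanSingleton ℂ (0:ℂ)).restrictScalars ℝ
          = (0 : ℂ →L[ℝ] ℂ) := by ext w; simp
      have := ((h x hx).hasFDerivAt.restrictScalars ℝ).hasFDerivWithinAt (s := ball (0:ℂ) 1)
      rwa [h0] at this)
    (fun x hx => by simp) (convex_ball 0 1) (mem_ball_self one_pos) hz
  have : ‖F z - F 0‖ ≤ 0 := by simpa using key
  have h0 : F z - F 0 = 0 := by
    have := norm_nonneg (F z - F 0)
    have : ‖F z - F 0‖ = 0 := le_antisymm ‹‖F z - F 0‖ ≤ 0› this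
    exact norm_eq_zero.mp this
  linear_combination h0

lemma scalar_main {f g : ℂ → ℂ} {c : ℝ} (hc : 0 ≤ c)
    (hdf : ∀ z ∈ ball (0:ℂ) 1, DifferentiableAt ℂ f z)
    (hdg : ∀ z ∈ ball (0:ℂ) 1, DifferentiableAt ℂ g z)
    (href : ∀ z ∈ ball (0:ℂ) 1, 0 ≤ (f z).re)
    (hreg : ∀ z ∈ ball (0:ℂ) 1, 0 ≤ (g z).re)
    (hsum : ∀ z ∈ ball (0:ℂ) 1, f z + g z = ((1+z)/(1-z)) * (c:ℂ)) :
    ∀ z ∈ ball (0:ℂ) 1, f z = f 0 + ((1+z)/(1-z) - 1) * (((f 0).re : ℝ) : ℂ) := by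
  set ψ : ℂ → ℂ := fun z => deriv f z * (1-z)^2 / 2 with hψ
  set ψg : ℂ → ℂ := fun z => deriv g z * (1-z)^2 / 2 with hψg
  -- sum of derivatives
  have hderiv_sum : ∀ z ∈ ball (0:ℂ) 1, deriv f z + deriv g z = 2*(c:ℂ)/(1-z)^2 := by
    intro z hz
    have h1 : HasDerivAt (fun z => f z + g z) (deriv f z + deriv g z) z :=
      ((hdf z hz).hasDerivAt).add ((hdg z hz).hasDerivAt)
    have h2 : HasDerivAt (fun z : ℂ => ((1+z)/(1-z)) * (c:ℂ)) (2/(1-z)^2 * (c:ℂ)) z :=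
      (phi_hasDeriv (one_sub_ne_s7 hz)).mul_const _
    have hev : (fun z => f z + g z) =ᶠ[nhds z] (fun z : ℂ => ((1+z)/(1-z)) * (c:ℂ)) := by
      filter_upwards [isOpen_ball.mem_nhds hz] with w hw
      exact hsum w hw
    have h1' : HasDerivAt (fun z : ℂ => ((1+z)/(1-z)) * (c:ℂ)) (deriv f z + deriv g z) z :=
      h1.congr_of_eventuallyEq hev.symm
    have := h1'.unique h2
    rw [this]; ring
  have hψsum : ∀ z ∈ ball (0:ℂ) 1, ψ z + ψg z = (c:ℂ) := by
    intro z hz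
    have h1 := hderiv_sum z hz
    have h2 : ((1:ℂ)-z)^2 ≠ 0 := pow_ne_zero _ (one_sub_ne_s7 hz)
    have h1' : (deriv f z + deriv g z) * ((1:ℂ)-z)^2 = 2*(c:ℂ) := by
      rw [h1, div_mul_cancel₀ _ h2]
    simp only [hψ, hψg]
    linear_combination h1' / 2
  -- bound
  have hψbound : ∀ z ∈ ball (0:ℂ) 1,
      Complex.abs (ψ z) + Complex.abs (ψg z) ≤ c := by
    intro z hz
    have hz' : Complex.abs z < 1 := by rwa [mem_ball_zero_iff] at hz
    have hpos : 0 < 1 - (Complex.abs z)^2 := by nlinarith [Complex.abs.nonneg z]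
    have hf := herglotz_deriv_bound hdf href hz
    have hg := herglotz_deriv_bound hdg hreg hz
    have habsψ : Complex.abs (ψ z) = ‖deriv f z‖ * (Complex.abs (1-z))^2 / 2 := by
      simp [hψ, map_div₀, map_mul, map_pow]
    have habsψg : Complex.abs (ψg z) = ‖deriv g z‖ * (Complex.abs (1-z))^2 / 2 := by
      simp [hψg, map_div₀, map_mul, map_pow]
    -- re f z + re g z = c * (1 - normSq z)/normSq (1-z)
    have hre_sum : (f z).re + (g z).re = c * (1 - Complex.normSq z) / Complex.normSq (1-z) := by
      have := hsum z hz
      have h2 : (f z + g z).re = (((1+z)/(1-z)) * (c:ℂ)).re := by rw [this]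
      simp only [Complex.add_re] at h2
      rw [h2]
      rw [Complex.mul_re]
      simp only [Complex.ofReal_re, Complex.ofReal_im, mul_zero, sub_zero]
      rw [phi_re]
      ring
    have hnsq : (Complex.abs (1-z))^2 = Complex.normSq (1-z) := Complex.sq_abs _
    have habsz : (Complex.abs z)^2 = Complex.normSq z := Complex.sq_abs _
    have hden_pos : 0 < Complex.normSq (1-z) := by
      rw [Complex.normSq_pos]; exact one_sub_ne_s7 hz
    -- multiply bounds
    have key : (Complex.abs (ψ z) + Complex.abs (ψg z)) * (1 - Complex.normSq z)
        ≤ c * (1 - Complex.normSq z) := by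
      rw [habsψ, habsψg]
      have e1 : (‖deriv f z‖ * Complex.abs (1-z) ^ 2 / 2 + ‖deriv g z‖ * Complex.abs (1-z) ^ 2 / 2)
          * (1 - Complex.normSq z)
          = (‖deriv f z‖ * (1 - (Complex.abs z)^2) + ‖deriv g z‖ * (1 - (Complex.abs z)^2))
            * Complex.abs (1-z) ^ 2 / 2 := by rw [habsz]; ring
      rw [e1]
      calc (‖deriv f z‖ * (1 - (Complex.abs z)^2) + ‖deriv g z‖ * (1 - (Complex.abs z)^2))
            * Complex.abs (1-z) ^ 2 / 2
          ≤ (2*(f z).re + 2*(g z).re) * Complex.abs (1-z) ^ 2 / 2 := by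
            apply div_le_div_of_nonneg_right _ (by norm_num)
            · apply mul_le_mul_of_nonneg_right (by linarith) (by positivity)
        _ = ((f z).re + (g z).re) * Complex.abs (1-z) ^ 2 := by ring
        _ = c * (1 - Complex.normSq z) := by
            rw [hre_sum, hnsq]; field_simp
    have hpos' : 0 < 1 - Complex.normSq z := by rwa [habsz] at hpos
    exact le_of_mul_le_mul_right (by linarith [key]) hpos'
  -- ψ is real valued on the ball
  have hψreal : ∀ z ∈ ball (0:ℂ) 1, (ψ z).im = 0 := by
    intro z hz
    apply im_zero_of_abs_add (ψ z) c
    have h1 : (c:ℂ) - ψ z = ψg z := by linear_combination - hψsum z hz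
    rw [h1]
    exact hψbound z hz
  -- ψ has zero derivative
  have hψdiff : ∀ z ∈ ball (0:ℂ) 1, DifferentiableAt ℂ ψ z := by
    have hfan : AnalyticOnNhd ℂ f (ball (0:ℂ) 1) :=
      DifferentiableOn.analyticOnNhd (fun z hz => (hdf z hz).differentiableWithinAt) isOpen_ball
    have hfan' : AnalyticOnNhd ℂ (deriv f) (ball (0:ℂ) 1) := hfan.deriv
    intro z hz
    exact ((hfan' z hz).differentiableAt).mul
      ((differentiableAt_const _ |>.sub differentiableAt_id).pow 2) |>.div_const _
  have hψconst : ∀ z ∈ ball (0:ℂ) 1, ψ z = ψ 0 := by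
    apply const_of_deriv_zero
    intro z hz
    have hder := (hψdiff z hz).hasDerivAt
    have h0 : deriv ψ z = 0 := by
      apply deriv_zero_of_real hder
      filter_upwards [isOpen_ball.mem_nhds hz] with w hw
      exact hψreal w hw
    rwa [h0] at hder
  set b : ℂ := ψ 0 with hb
  have hbim : b.im = 0 := hψreal 0 (mem_ball_self one_pos)
  -- F := f - b φ is constant
  have hF : ∀ z ∈ ball (0:ℂ) 1, f z - b * ((1+z)/(1-z)) = f 0 - b * ((1+0)/(1-0)) := by
    apply const_of_deriv_zero (F := fun z => f z - b * ((1+z)/(1-z)))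
    intro z hz
    have h1 : HasDerivAt f (deriv f z) z := (hdf z hz).hasDerivAt
    have h2 : HasDerivAt (fun z : ℂ => b * ((1+z)/(1-z))) (b * (2/(1-z)^2)) z :=
      (phi_hasDeriv (one_sub_ne_s7 hz)).const_mul b
    have h3 := h1.sub h2
    have h4 : deriv f z - b * (2/(1-z)^2) = 0 := by
      have h5 : ψ z = b := hψconst z hz
      have h6 : ((1:ℂ)-z)^2 ≠ 0 := pow_ne_zero _ (one_sub_ne_s7 hz)
      simp only [hψ] at h5
      have h5' : deriv f z * ((1:ℂ)-z)^2 = 2*b := by linear_combination 2 * h5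
      rw [sub_eq_zero, mul_div_assoc', eq_div_iff h6]
      linear_combination h5'
    rwa [h4] at h3
  have hfform : ∀ z ∈ ball (0:ℂ) 1, f z = f 0 + ((1+z)/(1-z) - 1) * b := by
    intro z hz
    have := hF z hz
    have h0 : ((1:ℂ)+0)/(1-0) = 1 := by norm_num
    rw [h0] at this
    linear_combination this
  -- now show b = (f 0).re
  have hbre : b = (((f 0).re : ℝ) : ℂ) := by
    have hb' : b = ((b.re : ℝ) : ℂ) := by
      apply Complex.ext <;> simp [hbim]
    rw [hb']
    norm_cast
    -- limit argument along z = -r, r → 1⁻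
    have hineq : ∀ t : ℝ, t ∈ Ioo (0:ℝ) 1 →
        0 ≤ (f 0).re + b.re * (t - 1) ∧ (f 0).re + b.re * (t - 1) ≤ c * t := by
      intro t ht
      obtain ⟨ht0, ht1⟩ := ht
      set r : ℝ := (1 - t) / (1 + t) with hr
      have hrpos : 0 ≤ r := by
        apply div_nonneg <;> linarith
      have hrlt : r < 1 := by
        rw [hr, div_lt_one (by linarith)]; linarith
      set z : ℂ := -(r:ℂ) with hzdef
      have hzball : z ∈ ball (0:ℂ) 1 := by
        rw [mem_ball_zero_iff, hzdef]
        simp only [norm_neg, Complex.norm_real, Real.norm_eq_abs]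
        rw [_root_.abs_of_nonneg hrpos]; exact hrlt
      have hphi : ((1:ℂ)+z)/(1-z) = ((t:ℝ):ℂ) := by
        rw [hzdef]
        have h1 : (1:ℂ) - (-(r:ℂ)) = (((1+r : ℝ)):ℂ) := by push_cast; ring
        have h2 : (1:ℂ) + (-(r:ℂ)) = (((1-r : ℝ)):ℂ) := by push_cast; ring
        rw [h1, h2, ← Complex.ofReal_div]
        congr 1
        rw [hr]
        have h3 : (1:ℝ) + t ≠ 0 := by linarith
        field_simp
        ring
      have hfz : f z = f 0 + (((t:ℝ):ℂ) - 1) * b := by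
        have := hfform z hzball
        rw [hphi] at this
        exact this
      have hfzre : (f z).re = (f 0).re + (t - 1) * b.re := by
        rw [hfz]
        simp only [Complex.add_re, Complex.mul_re, Complex.sub_re, Complex.sub_im,
          Complex.ofReal_re, Complex.ofReal_im, Complex.one_re, Complex.one_im, hbim]
        ring
      constructor
      · have h0 := href z hzball
        rw [hfzre] at h0
        linarith
      · have hs := hsum z hzball
        rw [hphi] at hs
        have hre : (f z).re + (g z).re = t * c := by
          have : (f z + g z).re = (((t:ℝ):ℂ) * (c:ℂ)).re := by rw [hs]
          simpa using this
        have hg0 := hreg z hzball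
        rw [hfzre] at hre
        linarith
    set d : ℝ := (f 0).re - b.re with hd
    have hub : d ≤ 0 := by
      have hev : ∀ᶠ t in nhdsWithin (0:ℝ) (Ioi 0), d ≤ (c - b.re) * t := by
        filter_upwards [Ioo_mem_nhdsGT_of_mem (by constructor <;> norm_num : (0:ℝ) ∈ Ico (0:ℝ) 1)]
          with t ht
        have := (hineq t ht).2
        rw [hd]; nlinarith [this]
      have htend : Tendsto (fun t : ℝ => (c - b.re) * t) (nhdsWithin (0:ℝ) (Ioi 0)) (nhds 0) := by
        have : Tendsto (fun t : ℝ => (c - b.re) * t) (nhds 0) (nhds ((c - b.re) * 0)) :=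
          (continuous_const.mul continuous_id).tendsto 0
        rw [mul_zero] at this
        exact this.mono_left nhdsWithin_le_nhds
      exact ge_of_tendsto htend hev
    have hlb : 0 ≤ d := by
      have hev : ∀ᶠ t in nhdsWithin (0:ℝ) (Ioi 0), (- b.re) * t ≤ d := by
        filter_upwards [Ioo_mem_nhdsGT_of_mem (by constructor <;> norm_num : (0:ℝ) ∈ Ico (0:ℝ) 1)]
          with t ht
        have := (hineq t ht).1
        rw [hd]; nlinarith [this]
      have htend : Tendsto (fun t : ℝ => (- b.re) * t) (nhdsWithin (0:ℝ) (Ioi 0)) (nhds 0) := by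
        have : Tendsto (fun t : ℝ => (- b.re) * t) (nhds 0) (nhds ((- b.re) * 0)) :=
          (continuous_const.mul continuous_id).tendsto 0
        rw [mul_zero] at this
        exact this.mono_left nhdsWithin_le_nhds
      exact le_of_tendsto htend hev
    have : d = 0 := le_antisymm hub hlb
    rw [hd] at this
    linarith
  intro z hz
  rw [hfform z hz, hbre]



variable {H : Type*} [NormedAddCommGroup H] [InnerProductSpace ℂ H] [CompleteSpace H]

local notation "⟪" x ", " y "⟫" => @inner ℂ _ _ x y

/-- One-sided operator conclusion. -/
lemma op_half (h k : ℂ → H →L[ℂ] H)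
    (hdh : ∀ z ∈ Metric.ball (0 : ℂ) 1, DifferentiableAt ℂ h z)
    (hdk : ∀ z ∈ Metric.ball (0 : ℂ) 1, DifferentiableAt ℂ k z)
    (hreh : ∀ z ∈ Metric.ball (0 : ℂ) 1,
      ((1 / 2 : ℂ) • (h z + adjoint (h z))).IsPositive)
    (hrek : ∀ z ∈ Metric.ball (0 : ℂ) 1,
      ((1 / 2 : ℂ) • (k z + adjoint (k z))).IsPositive)
    (hsum : ∀ z ∈ Metric.ball (0 : ℂ) 1,
      h z + k z = ((1 + z) / (1 - z)) • (1 : H →L[ℂ] H)) :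
    ∀ z ∈ Metric.ball (0 : ℂ) 1,
      h z = h 0 + ((1 + z) / (1 - z) - 1) • ((1 / 2 : ℂ) • (h 0 + adjoint (h 0))) := by
  have h0ball : (0:ℂ) ∈ Metric.ball (0:ℂ) 1 := Metric.mem_ball_self one_pos
  -- real part of quadratic forms
  have hre_quad : ∀ (T : H →L[ℂ] H), ((1 / 2 : ℂ) • (T + adjoint T)).IsPositive →
      ∀ x : H, 0 ≤ (⟪x, T x⟫).re := by
    intro T hT x
    have h1 := hT.2 x
    rw [reApplyInnerSelf_apply] at h1
    have h1' : 0 ≤ (⟪((1 / 2 : ℂ) • (T + adjoint T)) x, x⟫).re := h1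
    have hcr : (⟪T x, x⟫ : ℂ) = (starRingEnd ℂ) (⟪x, T x⟫ : ℂ) := (inner_conj_symm _ _).symm
    have hmain : (starRingEnd ℂ) (1/2 : ℂ) * ((starRingEnd ℂ) (⟪x, T x⟫:ℂ) + (⟪x, T x⟫:ℂ))
        = ((((⟪x, T x⟫:ℂ).re : ℝ)):ℂ) := by
      rw [add_comm, Complex.add_conj]
      have : (starRingEnd ℂ) (1/2 : ℂ) = (1/2 : ℂ) := by
        rw [show (1/2 : ℂ) = ((1/2 : ℝ) : ℂ) by norm_num, Complex.conj_ofReal]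
      rw [this]
      push_cast
      ring
    have he : (⟪((1 / 2 : ℂ) • (T + adjoint T)) x, x⟫).re = (⟪x, T x⟫).re := by
      rw [smul_apply, add_apply, inner_smul_left, inner_add_left, adjoint_inner_left, hcr,
        hmain, Complex.ofReal_re]
    rw [he] at h1'
    exact h1'
  intro z hz
  -- pointwise quadratic form identity
  have quad : ∀ x : H, ⟪x, h z x⟫ = ⟪x, (h 0 + ((1 + z) / (1 - z) - 1) •
      ((1 / 2 : ℂ) • (h 0 + adjoint (h 0)))) x⟫ := by
    intro x
    set f : ℂ → ℂ := fun w => ⟪x, h w x⟫ with hf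
    set g : ℂ → ℂ := fun w => ⟪x, k w x⟫ with hg
    have hdiff : ∀ (m : ℂ → H →L[ℂ] H), (∀ w ∈ Metric.ball (0:ℂ) 1, DifferentiableAt ℂ m w) →
        ∀ w ∈ Metric.ball (0:ℂ) 1, DifferentiableAt ℂ (fun u => (⟪x, m u x⟫ : ℂ)) w := by
      intro m hm w hw
      have h1 : DifferentiableAt ℂ (fun T : H →L[ℂ] H => (⟪x, T x⟫ : ℂ)) (m w) :=
        ((innerSL ℂ x).comp (ContinuousLinearMap.apply ℂ H x)).differentiableAt
      exact h1.comp w (hm w hw)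
    have hsum' : ∀ w ∈ Metric.ball (0:ℂ) 1, f w + g w = ((1+w)/(1-w)) * ((‖x‖^2 : ℝ) : ℂ) := by
      intro w hw
      have h1 : h w x + k w x = ((1 + w) / (1 - w)) • x := by
        have := hsum w hw
        calc h w x + k w x = (h w + k w) x := rfl
          _ = (((1 + w) / (1 - w)) • (1 : H →L[ℂ] H)) x := by rw [this]
          _ = ((1 + w) / (1 - w)) • x := by simp
      simp only [hf, hg]
      rw [← inner_add_right, h1, inner_smul_right, inner_self_eq_norm_sq_to_K]
      norm_cast
    have hkey := scalar_main (c := ‖x‖^2) (by positivity)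
      (hdiff h hdh) (hdiff k hdk)
      (fun w hw => hre_quad (h w) (hreh w hw) x)
      (fun w hw => hre_quad (k w) (hrek w hw) x)
      hsum' z hz
    -- identify (f 0).re with the inner product against B
    have hB : ((((f 0).re : ℝ)) : ℂ) = ⟪x, ((1 / 2 : ℂ) • (h 0 + adjoint (h 0))) x⟫ := by
      rw [smul_apply, add_apply, inner_smul_right, inner_add_right]
      rw [adjoint_inner_right]
      rw [← inner_conj_symm (h 0 x) x]
      have hac : (⟪x, h 0 x⟫ : ℂ) + (starRingEnd ℂ) ⟪x, h 0 x⟫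
          = (((⟪x, h 0 x⟫ : ℂ).re : ℝ) : ℂ) * 2 := by
        rw [Complex.add_conj]
        push_cast
        ring
      rw [hac]
      simp only [hf]
      ring
    rw [add_apply, inner_add_right, smul_apply, inner_smul_right, ← hB]
    exact hkey
  -- conclude operator equality
  have : ∀ x : H, ⟪(h z - (h 0 + ((1 + z) / (1 - z) - 1) •
      ((1 / 2 : ℂ) • (h 0 + adjoint (h 0))))) x, x⟫ = 0 := by
    intro x
    have e1 : (⟪(h z) x, x⟫:ℂ) = (starRingEnd ℂ) (⟪x, (h z) x⟫:ℂ) := (inner_conj_symm _ _).symm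
    have e2 : (⟪(h 0 + ((1 + z) / (1 - z) - 1) • ((1 / 2 : ℂ) • (h 0 + adjoint (h 0)))) x, x⟫:ℂ)
        = (starRingEnd ℂ) (⟪x, (h 0 + ((1 + z) / (1 - z) - 1) •
          ((1 / 2 : ℂ) • (h 0 + adjoint (h 0)))) x⟫:ℂ) := (inner_conj_symm _ _).symm
    rw [sub_apply, inner_sub_left, e1, e2, quad x]
    ring
  have h2 := (inner_map_self_eq_zero _).mp (fun x => this x)
  have h3 : h z - (h 0 + ((1 + z) / (1 - z) - 1) •
      ((1 / 2 : ℂ) • (h 0 + adjoint (h 0)))) = 0 := by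
    ext x
    have := congrArg (fun (T : H →ₗ[ℂ] H) => T x) h2
    simpa using this
  linear_combination (norm := abel) h3

end Aux

/-- Operator Herglotz consequence: if `h₁, h₂ : D → B(H)` are holomorphic with positive
real parts and `h₁(z) + h₂(z) = ((1+z)/(1-z)) • I`, then there are self-adjoint `A₁, A₂`
and positive `B₁, B₂` with `B₁ + B₂ = I` such that
`h_j(z) = i • A_j + ((1+z)/(1-z)) • B_j` on the disc. -/
theorem stmt_7 {H : Type*} [NormedAddCommGroup H] [InnerProductSpace ℂ H]
    [CompleteSpace H] [TopologicalSpace.SeparableSpace H]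
    (h₁ h₂ : ℂ → H →L[ℂ] H)
    (hd₁ : ∀ z ∈ Metric.ball (0 : ℂ) 1, DifferentiableAt ℂ h₁ z)
    (hd₂ : ∀ z ∈ Metric.ball (0 : ℂ) 1, DifferentiableAt ℂ h₂ z)
    (hre₁ : ∀ z ∈ Metric.ball (0 : ℂ) 1,
      ((1 / 2 : ℂ) • (h₁ z + adjoint (h₁ z))).IsPositive)
    (hre₂ : ∀ z ∈ Metric.ball (0 : ℂ) 1,
      ((1 / 2 : ℂ) • (h₂ z + adjoint (h₂ z))).IsPositive)
    (hsum : ∀ z ∈ Metric.ball (0 : ℂ) 1,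
      h₁ z + h₂ z = ((1 + z) / (1 - z)) • (1 : H →L[ℂ] H)) :
    ∃ A₁ A₂ B₁ B₂ : H →L[ℂ] H,
      IsSelfAdjoint A₁ ∧ IsSelfAdjoint A₂ ∧
      B₁.IsPositive ∧ B₂.IsPositive ∧ B₁ + B₂ = 1 ∧
      (∀ z ∈ Metric.ball (0 : ℂ) 1,
        h₁ z = Complex.I • A₁ + ((1 + z) / (1 - z)) • B₁) ∧
      (∀ z ∈ Metric.ball (0 : ℂ) 1,
        h₂ z = Complex.I • A₂ + ((1 + z) / (1 - z)) • B₂) := by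
  have h0ball : (0:ℂ) ∈ Metric.ball (0:ℂ) 1 := Metric.mem_ball_self one_pos
  set A₁ : H →L[ℂ] H := (-Complex.I) • ((1/2:ℂ) • (h₁ 0 - adjoint (h₁ 0))) with hA₁
  set A₂ : H →L[ℂ] H := (-Complex.I) • ((1/2:ℂ) • (h₂ 0 - adjoint (h₂ 0))) with hA₂
  set B₁ : H →L[ℂ] H := (1/2:ℂ) • (h₁ 0 + adjoint (h₁ 0)) with hB₁
  set B₂ : H →L[ℂ] H := (1/2:ℂ) • (h₂ 0 + adjoint (h₂ 0)) with hB₂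
  have hII : Complex.I * -Complex.I = 1 := by
    rw [mul_neg, Complex.I_mul_I]; norm_num
  have hsa : ∀ T : H →L[ℂ] H,
      IsSelfAdjoint ((-Complex.I) • ((1/2:ℂ) • (T - adjoint T))) := by
    intro T
    rw [IsSelfAdjoint]
    have hhalf : (starRingEnd ℂ) (1/2 : ℂ) = (1/2 : ℂ) := by
      rw [show (1/2 : ℂ) = ((1/2 : ℝ) : ℂ) by norm_num, Complex.conj_ofReal]
    simp only [star_smul, star_sub, ContinuousLinearMap.star_eq_adjoint, adjoint_adjoint,
      star_neg, Complex.star_def, Complex.conj_I, hhalf]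
    module
  have hdecomp : ∀ T : H →L[ℂ] H,
      Complex.I • ((-Complex.I) • ((1/2:ℂ) • (T - adjoint T)))
        + (1/2:ℂ) • (T + adjoint T) = T := by
    intro T
    rw [smul_smul, hII, one_smul]
    module
  have hadd : h₁ 0 + h₂ 0 = 1 := by
    have := hsum 0 h0ball
    simpa using this
  have hBsum : B₁ + B₂ = 1 := by
    have hadj : adjoint (h₁ 0) + adjoint (h₂ 0) = 1 := by
      rw [← map_add, hadd]
      have : adjoint (1 : H →L[ℂ] H) = 1 := by
        calc adjoint (1 : H →L[ℂ] H) = adjoint (ContinuousLinearMap.id ℂ H) := rfl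
          _ = ContinuousLinearMap.id ℂ H := adjoint_id
          _ = 1 := rfl
      rw [this]
    calc B₁ + B₂ = (1/2:ℂ) • ((h₁ 0 + h₂ 0) + (adjoint (h₁ 0) + adjoint (h₂ 0))) := by
          rw [hB₁, hB₂]; module
      _ = (1/2:ℂ) • ((1 : H →L[ℂ] H) + 1) := by rw [hadd, hadj]
      _ = 1 := by module
  have hid₁ := op_half h₁ h₂ hd₁ hd₂ hre₁ hre₂ hsum
  have hid₂ := op_half h₂ h₁ hd₂ hd₁ hre₂ hre₁
    (fun z hz => by rw [add_comm]; exact hsum z hz)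
  refine ⟨A₁, A₂, B₁, B₂, hsa (h₁ 0), hsa (h₂ 0), hre₁ 0 h0ball, hre₂ 0 h0ball, hBsum, ?_, ?_⟩
  · intro z hz
    have := hid₁ z hz
    rw [this, ← hB₁]
    have hd := hdecomp (h₁ 0)
    rw [← hB₁, ← hA₁] at hd
    rw [← hd]
    module
  · intro z hz
    have := hid₂ z hz
    rw [this, ← hB₂]
    have hd := hdecomp (h₂ 0)
    rw [← hB₂, ← hA₂] at hd
    rw [← hd]
    module
end

section
/- Let E be a finite-dimensional complex Hilbert space and let ψ₁, ψ₂ : D → B(E) be holomorphic functions with ‖ψ_j(z)‖ ≤ 1 for all z ∈ D and j = 1, 2, such that I − ψ_j(z) is invertible for every z ∈ D, and such that (I + ψ₁(z))(I − ψ₁(z))⁻¹ + (I + ψ₂(z))(I − ψ₂(z))⁻¹ = ((1 + z)/(1 − z))·I for all z ∈ D. Then for every z ∈ D the real parts satisfy 0 ≤ Re[(I + ψ_j(z))(I − ψ_j(z))⁻¹] ≤ ((1 − |z|²)/|1 − z|²)·I for j = 1, 2. -/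
open ContinuousLinearMap

open scoped InnerProduct ComplexConjugate

local notation "⟪" x ", " y "⟫" => @inner ℂ _ _ x y

lemma cayley_pos {E : Type*} [NormedAddCommGroup E] [InnerProductSpace ℂ E]
    [FiniteDimensional ℂ E] (ψ : E →L[ℂ] E) (hn : ‖ψ‖ ≤ 1) (h : IsUnit (1 - ψ)) :
    ((1 / 2 : ℂ) • ((1 + ψ) * Ring.inverse (1 - ψ) +
        adjoint ((1 + ψ) * Ring.inverse (1 - ψ)))).IsPositive := by
  set T : E →L[ℂ] E := (1 + ψ) * Ring.inverse (1 - ψ) with hT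
  rw [isPositive_def']
  constructor
  · -- self-adjointness
    rw [IsSelfAdjoint, star_smul, star_add]
    simp only [star_eq_adjoint, adjoint_adjoint]
    rw [add_comm]
    norm_num
  · intro x
    have hx : (1 - ψ) (Ring.inverse (1 - ψ) x) = x := by
      have : (1 - ψ) * Ring.inverse (1 - ψ) = 1 := Ring.mul_inverse_cancel _ h
      calc (1 - ψ) (Ring.inverse (1 - ψ) x) = ((1 - ψ) * Ring.inverse (1 - ψ)) x := rfl
        _ = x := by rw [this]; rfl
    set y : E := Ring.inverse (1 - ψ) x with hy
    have hTx : T x = (1 + ψ) y := rfl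
    have hre : ((1 / 2 : ℂ) • (T + adjoint T)).reApplyInnerSelf x =
        Complex.re ⟪T x, x⟫ := by
      rw [reApplyInnerSelf]
      rw [smul_apply, add_apply, inner_smul_left, inner_add_left]
      have hadj : ⟪(adjoint T) x, x⟫ = ⟪x, T x⟫ := adjoint_inner_left T x x
      rw [hadj, ← inner_conj_symm x (T x), Complex.add_conj]
      have hconj : (starRingEnd ℂ) (1 / 2 : ℂ) = (1 / 2 : ℂ) := by
        rw [map_div₀, map_one, Complex.conj_ofNat]
      rw [hconj]
      norm_num [RCLike.re_to_complex, Complex.mul_re]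
      ring
    rw [hre, hTx, ← hx]
    have expand : ⟪(1 + ψ) y, (1 - ψ) y⟫ =
        ⟪y, y⟫ - ⟪y, ψ y⟫ + ⟪ψ y, y⟫ - ⟪ψ y, ψ y⟫ := by
      simp only [add_apply, sub_apply, ContinuousLinearMap.one_apply, inner_add_left, inner_sub_right]
      ring
    rw [expand]
    have h1 : Complex.re (⟪ψ y, y⟫ - ⟪y, ψ y⟫) = 0 := by
      rw [Complex.sub_re]
      have : Complex.re ⟪y, ψ y⟫ = Complex.re ⟪ψ y, y⟫ := by
        simpa [RCLike.re_to_complex] using inner_re_symm (𝕜 := ℂ) y (ψ y)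
      rw [this, sub_self]
    have h2 : Complex.re (⟪y, y⟫ - ⟪ψ y, ψ y⟫) = ‖y‖ ^ 2 - ‖ψ y‖ ^ 2 := by
      rw [Complex.sub_re]
      have hy1 : Complex.re ⟪y, y⟫ = ‖y‖ ^ 2 := by
        simpa [RCLike.re_to_complex] using inner_self_eq_norm_sq (𝕜 := ℂ) y
      have hy2 : Complex.re ⟪ψ y, ψ y⟫ = ‖ψ y‖ ^ 2 := by
        simpa [RCLike.re_to_complex] using inner_self_eq_norm_sq (𝕜 := ℂ) (ψ y)
      rw [hy1, hy2]
    have : Complex.re (⟪y, y⟫ - ⟪y, ψ y⟫ + ⟪ψ y, y⟫ - ⟪ψ y, ψ y⟫) =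
        ‖y‖ ^ 2 - ‖ψ y‖ ^ 2 := by
      have : ⟪y, y⟫ - ⟪y, ψ y⟫ + ⟪ψ y, y⟫ - ⟪ψ y, ψ y⟫ =
          (⟪y, y⟫ - ⟪ψ y, ψ y⟫) + (⟪ψ y, y⟫ - ⟪y, ψ y⟫) := by ring
      rw [this, Complex.add_re, h1, h2, add_zero]
    rw [this]
    have hψy : ‖ψ y‖ ≤ ‖y‖ := by
      calc ‖ψ y‖ ≤ ‖ψ‖ * ‖y‖ := ψ.le_opNorm y
        _ ≤ 1 * ‖y‖ := by gcongr
        _ = ‖y‖ := one_mul _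
    nlinarith [norm_nonneg (ψ y), norm_nonneg y]

set_option maxHeartbeats 1000000 in
/-- If `ψ₁, ψ₂ : D → B(E)` are holomorphic contraction-valued functions with `I - ψ_j(z)`
invertible whose Cayley transforms sum to `((1+z)/(1-z)) • I`, then for every `z` in the disc,
`0 ≤ Re[(I + ψ_j(z))(I - ψ_j(z))⁻¹] ≤ ((1-|z|²)/|1-z|²) • I` for `j = 1, 2`. -/
theorem stmt_10 {E : Type*} [NormedAddCommGroup E] [InnerProductSpace ℂ E]
    [FiniteDimensional ℂ E]
    (ψ₁ ψ₂ : ℂ → E →L[ℂ] E)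
    (hd₁ : ∀ z ∈ Metric.ball (0 : ℂ) 1, DifferentiableAt ℂ ψ₁ z)
    (hd₂ : ∀ z ∈ Metric.ball (0 : ℂ) 1, DifferentiableAt ℂ ψ₂ z)
    (hn₁ : ∀ z ∈ Metric.ball (0 : ℂ) 1, ‖ψ₁ z‖ ≤ 1)
    (hn₂ : ∀ z ∈ Metric.ball (0 : ℂ) 1, ‖ψ₂ z‖ ≤ 1)
    (hinv₁ : ∀ z ∈ Metric.ball (0 : ℂ) 1, IsUnit (1 - ψ₁ z))
    (hinv₂ : ∀ z ∈ Metric.ball (0 : ℂ) 1, IsUnit (1 - ψ₂ z))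
    (hsum : ∀ z ∈ Metric.ball (0 : ℂ) 1,
      (1 + ψ₁ z) * Ring.inverse (1 - ψ₁ z) + (1 + ψ₂ z) * Ring.inverse (1 - ψ₂ z)
        = ((1 + z) / (1 - z)) • (1 : E →L[ℂ] E)) :
    ∀ z ∈ Metric.ball (0 : ℂ) 1,
      ((1 / 2 : ℂ) • ((1 + ψ₁ z) * Ring.inverse (1 - ψ₁ z) +
          adjoint ((1 + ψ₁ z) * Ring.inverse (1 - ψ₁ z)))).IsPositive ∧
      ((((1 - ‖z‖ ^ 2) / ‖1 - z‖ ^ 2 : ℝ) : ℂ) • (1 : E →L[ℂ] E) -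
        (1 / 2 : ℂ) • ((1 + ψ₁ z) * Ring.inverse (1 - ψ₁ z) +
          adjoint ((1 + ψ₁ z) * Ring.inverse (1 - ψ₁ z)))).IsPositive ∧
      ((1 / 2 : ℂ) • ((1 + ψ₂ z) * Ring.inverse (1 - ψ₂ z) +
          adjoint ((1 + ψ₂ z) * Ring.inverse (1 - ψ₂ z)))).IsPositive ∧
      ((((1 - ‖z‖ ^ 2) / ‖1 - z‖ ^ 2 : ℝ) : ℂ) • (1 : E →L[ℂ] E) -
        (1 / 2 : ℂ) • ((1 + ψ₂ z) * Ring.inverse (1 - ψ₂ z) +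
          adjoint ((1 + ψ₂ z) * Ring.inverse (1 - ψ₂ z)))).IsPositive := by
  intro z hz
  have hpos₁ := cayley_pos (ψ₁ z) (hn₁ z hz) (hinv₁ z hz)
  have hpos₂ := cayley_pos (ψ₂ z) (hn₂ z hz) (hinv₂ z hz)
  set T₁ : E →L[ℂ] E := (1 + ψ₁ z) * Ring.inverse (1 - ψ₁ z) with hT₁
  set T₂ : E →L[ℂ] E := (1 + ψ₂ z) * Ring.inverse (1 - ψ₂ z) with hT₂
  have hzne : (1 : ℂ) - z ≠ 0 := by
    intro h
    have : z = 1 := by linear_combination -h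
    rw [this] at hz
    simp at hz
  -- key identity : (1/2)•(T₁ + T₁*) + (1/2)•(T₂ + T₂*) = c • 1
  have hc : Complex.re ((1 + z) / (1 - z)) =
      (1 - ‖z‖ ^ 2) / ‖1 - z‖ ^ 2 := by
    rw [Complex.div_re]
    rw [Complex.normSq_eq_norm_sq]
    have h1 : (1 + z).re * (1 - z).re + (1 + z).im * (1 - z).im
        = 1 - ‖z‖ ^ 2 := by
      simp [Complex.add_re, Complex.add_im, Complex.sub_re, Complex.sub_im,
        Complex.sq_norm, Complex.normSq_apply]
      ring
    rw [← h1]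
    ring
  have hkey : ((1 / 2 : ℂ) • (T₁ + adjoint T₁)) + ((1 / 2 : ℂ) • (T₂ + adjoint T₂)) =
      (((1 - ‖z‖ ^ 2) / ‖1 - z‖ ^ 2 : ℝ) : ℂ) • (1 : E →L[ℂ] E) := by
    have h2 : T₁ + T₂ = ((1 + z) / (1 - z)) • (1 : E →L[ℂ] E) := hsum z hz
    have h3 : adjoint T₁ + adjoint T₂ = (conj ((1 + z) / (1 - z))) • (1 : E →L[ℂ] E) := by
      have := congrArg (fun A : E →L[ℂ] E => star A) h2
      simpa only [star_add, star_smul, star_one, star_eq_adjoint, RCLike.star_def] using this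
    have h4 : ((1 / 2 : ℂ) • (T₁ + adjoint T₁)) + ((1 / 2 : ℂ) • (T₂ + adjoint T₂)) =
        (1 / 2 : ℂ) • ((T₁ + T₂) + (adjoint T₁ + adjoint T₂)) := by
      rw [← smul_add]; congr 1; abel
    rw [h4, h2, h3, ← add_smul, smul_smul]
    congr 1
    rw [Complex.add_conj, ← hc]
    push_cast
    ring
  refine ⟨hpos₁, ?_, hpos₂, ?_⟩
  · have : (((1 - ‖z‖ ^ 2) / ‖1 - z‖ ^ 2 : ℝ) : ℂ) • (1 : E →L[ℂ] E) -
        (1 / 2 : ℂ) • (T₁ + adjoint T₁) = (1 / 2 : ℂ) • (T₂ + adjoint T₂) := by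
      rw [← hkey]; abel
    rw [this]; exact hpos₂
  · have : (((1 - ‖z‖ ^ 2) / ‖1 - z‖ ^ 2 : ℝ) : ℂ) • (1 : E →L[ℂ] E) -
        (1 / 2 : ℂ) • (T₂ + adjoint T₂) = (1 / 2 : ℂ) • (T₁ + adjoint T₁) := by
      rw [← hkey]; abel
    rw [this]; exact hpos₁
end

section
/- Let E be a finite-dimensional complex Hilbert space, let A, B ∈ B(E) be self-adjoint with 0 ≤ B ≤ I, and let t ≥ 0. Then for every z ∈ D, the operator exp(t·(i·A + ((z + 1)/(z − 1))·B)) has norm at most 1, and the map z ↦ exp(t·(i·A + ((z + 1)/(z − 1))·B)) is holomorphic on D. -/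
open ContinuousLinearMap
open NormedSpace
local notation "⟪" x ", " y "⟫" => @inner ℂ _ _ x y

lemma hasDerivAt_exp_aux {E : Type*} [NormedAddCommGroup E] [InnerProductSpace ℂ E]
    [FiniteDimensional ℂ E] (M : E →L[ℂ] E) (s : ℝ) :
    HasDerivAt (fun u : ℝ => exp (u • M)) (exp (s • M) * M) s := by
  have h := hasFDerivAt_exp_smul_const (𝕂 := ℝ) (𝕊 := ℝ) M s
  simpa using h.hasDerivAt

lemma exp_contraction {E : Type*} [NormedAddCommGroup E] [InnerProductSpace ℂ E]
    [FiniteDimensional ℂ E] (M : E →L[ℂ] E)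
    (hM : ∀ x : E, (⟪M x, x⟫).re ≤ 0) : ‖exp M‖ ≤ 1 := by
  refine opNorm_le_bound _ zero_le_one fun x => ?_
  rw [one_mul]
  set g : ℝ → E := fun s => exp (s • M) x with hg
  have hgd : ∀ s : ℝ, HasDerivAt g (M (g s)) s := by
    intro s
    have h := hasDerivAt_exp_aux M s
    have h2 : HasDerivAt (fun u : ℝ => exp (u • M) x) ((exp (s • M) * M) x) s :=
      ((ContinuousLinearMap.apply ℂ E x).restrictScalars ℝ).hasFDerivAt.comp_hasDerivAt s h
    have hcomm : exp (s • M) * M = M * exp (s • M) :=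
      (((Commute.refl M).smul_left s).exp_left).eq
    rw [hcomm] at h2
    simpa [mul_apply] using h2
  set f : ℝ → ℝ := fun s => (⟪g s, g s⟫).re with hf
  have hfd : ∀ s : ℝ, HasDerivAt f ((⟪g s, M (g s)⟫ + ⟪M (g s), g s⟫).re) s := by
    intro s
    exact (Complex.reCLM.hasFDerivAt.comp_hasDerivAt s
      (((hgd s).inner ℂ (hgd s))))
  have hanti : Antitone f := by
    apply antitone_of_deriv_nonpos (fun s => (hfd s).differentiableAt)
    intro s
    rw [(hfd s).deriv]
    have h1 : (⟪g s, M (g s)⟫).re = (⟪M (g s), g s⟫).re := by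
      simpa using inner_re_symm (𝕜 := ℂ) (g s) (M (g s))
    simp only [Complex.add_re, h1]
    linarith [hM (g s)]
  have key := hanti (le_of_lt one_pos : (0:ℝ) ≤ 1)
  have h0 : f 0 = ‖x‖ ^ 2 := by
    have := inner_self_eq_norm_sq (𝕜 := ℂ) x
    simp only [hf, hg, zero_smul, NormedSpace.exp_zero, one_apply]
    simpa using this
  have h1 : f 1 = ‖exp M x‖ ^ 2 := by
    have := inner_self_eq_norm_sq (𝕜 := ℂ) (exp M x)
    simp only [hf, hg, one_smul]
    simpa using this
  rw [h0, h1] at key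
  nlinarith [norm_nonneg (exp M x), norm_nonneg x]

lemma re_frac_nonpos (z : ℂ) (hz : ‖z‖ < 1) : ((z + 1) / (z - 1)).re ≤ 0 := by
  have hz1 : z - 1 ≠ 0 := sub_ne_zero.mpr (by rintro rfl; simp at hz)
  have hn : 0 < Complex.normSq (z - 1) := Complex.normSq_pos.mpr hz1
  have habs : z.re ^ 2 + z.im ^ 2 < 1 := by
    have h1 := Complex.sq_norm z
    have h2 := Complex.normSq_apply z
    nlinarith [norm_nonneg z]
  rw [Complex.div_re, ← add_div]
  apply div_nonpos_of_nonpos_of_nonneg _ hn.le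
  simp only [Complex.add_re, Complex.sub_re, Complex.one_re, Complex.add_im, Complex.sub_im,
    Complex.one_im]
  nlinarith

set_option maxHeartbeats 1000000 in
/-- For self-adjoint `A, B ∈ B(E)` with `0 ≤ B ≤ I` and `t ≥ 0`, the map
`z ↦ exp(t • (i•A + ((z+1)/(z-1))•B))` is contraction-valued and holomorphic on the
open unit disc. -/
theorem stmt_12 {E : Type*} [NormedAddCommGroup E] [InnerProductSpace ℂ E]
    [FiniteDimensional ℂ E]
    (A B : E →L[ℂ] E) (hA : IsSelfAdjoint A) (hB : IsSelfAdjoint B)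
    (hBpos : B.IsPositive) (hBle : (1 - B).IsPositive) (t : ℝ) (ht : 0 ≤ t) :
    (∀ z ∈ Metric.ball (0 : ℂ) 1,
      ‖NormedSpace.exp ((t : ℂ) • (Complex.I • A + ((z + 1) / (z - 1)) • B))‖ ≤ 1) ∧
    (∀ z ∈ Metric.ball (0 : ℂ) 1,
      DifferentiableAt ℂ
        (fun w => NormedSpace.exp ((t : ℂ) • (Complex.I • A + ((w + 1) / (w - 1)) • B)))
        z) := by
  constructor
  · intro z hz
    rw [mem_ball_zero_iff] at hz
    set c : ℂ := (z + 1) / (z - 1) with hcdef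
    have hc : c.re ≤ 0 := re_frac_nonpos z (by simpa [Complex.norm_def] using hz)
    apply exp_contraction
    intro x
    have ha : (⟪x, A x⟫).im = 0 := by
      have ha' : ⟪A x, x⟫ = ⟪x, A x⟫ := by
        conv_lhs => rw [← hA.adjoint_eq]
        exact ContinuousLinearMap.adjoint_inner_left A x x
      have hconj : (starRingEnd ℂ) ⟪x, A x⟫ = ⟪x, A x⟫ := by
        rw [inner_conj_symm]; exact ha'
      exact Complex.conj_eq_iff_im.mp hconj
    have hbim : (⟪x, B x⟫).im = 0 := by
      have hb' : ⟪B x, x⟫ = ⟪x, B x⟫ := by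
        conv_lhs => rw [← hB.adjoint_eq]
        exact ContinuousLinearMap.adjoint_inner_left B x x
      have hconj : (starRingEnd ℂ) ⟪x, B x⟫ = ⟪x, B x⟫ := by
        rw [inner_conj_symm]; exact hb'
      exact Complex.conj_eq_iff_im.mp hconj
    have hbre : 0 ≤ (⟪x, B x⟫).re := by
      have h1 := hBpos.2 x
      have h2 : (⟪B x, x⟫).re = (⟪x, B x⟫).re := by
        simpa using inner_re_symm (𝕜 := ℂ) (B x) x
      rw [ContinuousLinearMap.reApplyInnerSelf] at h1
      simpa [← h2] using h1
    have hsym : (⟪((t : ℂ) • (Complex.I • A + c • B)) x, x⟫).re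
        = (⟪x, ((t : ℂ) • (Complex.I • A + c • B)) x⟫).re := by
      exact inner_re_symm (𝕜 := ℂ) (((t : ℂ) • (Complex.I • A + c • B)) x) x
    rw [hsym]
    have expand : ⟪x, ((t : ℂ) • (Complex.I • A + c • B)) x⟫
        = (t : ℂ) * (Complex.I * ⟪x, A x⟫ + c * ⟪x, B x⟫) := by
      simp only [ContinuousLinearMap.smul_apply, ContinuousLinearMap.add_apply,
        inner_add_right, inner_smul_right]
    rw [expand]
    simp only [Complex.mul_re, Complex.mul_im, Complex.add_re, Complex.add_im,
      Complex.I_re, Complex.I_im, Complex.ofReal_re, Complex.ofReal_im, ha, hbim]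
    nlinarith [mul_nonneg ht hbre]
  · intro z hz
    rw [mem_ball_zero_iff] at hz
    have hz1 : z - 1 ≠ 0 := sub_ne_zero.mpr (by rintro rfl; simp at hz)
    have hF : DifferentiableAt ℂ
        (fun w : ℂ => (t : ℂ) • (Complex.I • A + ((w + 1) / (w - 1)) • B)) z := by
      refine DifferentiableAt.const_smul (f := fun w : ℂ => Complex.I • A + ((w + 1) / (w - 1)) • B) (𝕜 := ℂ) ?_ (t : ℂ)
      apply (differentiableAt_const _).add
      have h1 : DifferentiableAt ℂ (fun w : ℂ => (w + 1) / (w - 1)) z :=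
        DifferentiableAt.div (by fun_prop) (by fun_prop) hz1
      exact h1.smul_const B
    exact ((exp_analytic (𝕂 := ℂ) _).differentiableAt).comp z hF
end
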